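/- arXiv:1305.3238 — 5 statements merged into one kernel-verified Lean document; each statement's English description precedes it below -/
import Mathlib

section
/- Let k ≥ 1 be an integer, let s be a complex number with Re s > 1, and let α be a complex number with |α| < k. Then the series Σ_{n≥k} (n+α)^{−s} (which converges absolutely, and in which n+α ≠ 0 for every n ≥ k) satisfies Σ_{n≥k} (n+α)^{−s} = Σ_{n≥0} c_{n,k}(s)·(−α)^n/n!. -/
set_option maxHeartbeats 1000000

noncomputable def zetaK (k : ℕ) (s : ℂ) : ℂ :=
  riemannZeta s - ∑ m ∈ Finset.Ico 1 k, (m : ℂ) ^ (-s)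

noncomputable def c (n k : ℕ) (s : ℂ) : ℂ :=
  (∏ j ∈ Finset.range n, (s + j)) * zetaK k (s + n)

open Complex Finset Filter

lemma zetaK_eq_tsum (k : ℕ) (hk : 1 ≤ k) (w : ℂ) (hw : 1 < w.re) :
    zetaK k w = ∑' m : ℕ, ((m : ℂ) + k) ^ (-w) := by
  set g : ℕ → ℂ := fun n => ((n : ℂ) + 1) ^ (-w) with hg
  have hsum : Summable g := by
    have h0 : Summable (fun n : ℕ => 1 / (n : ℂ) ^ w) :=
      Complex.summable_one_div_nat_cpow.mpr hw
    have h1 := (summable_nat_add_iff 1).mpr h0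
    refine h1.congr fun n => ?_
    simp only [g, cpow_neg, one_div]
    push_cast
    ring_nf
  have hzeta : riemannZeta w = ∑' n : ℕ, g n := by
    rw [zeta_eq_tsum_one_div_nat_add_one_cpow hw]
    exact tsum_congr fun n => by simp only [hg, cpow_neg, one_div]
  have hsplit := Summable.sum_add_tsum_nat_add (k - 1) hsum
  have hshift : (fun n : ℕ => g (n + (k - 1))) = fun n : ℕ => ((n : ℂ) + k) ^ (-w) := by
    funext n
    have : ((n + (k - 1) : ℕ) : ℂ) + 1 = (n : ℂ) + k := by
      push_cast [Nat.cast_sub hk]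
      ring
    simp only [g, this]
  have hfin : ∑ m ∈ Finset.Ico 1 k, (m : ℂ) ^ (-w) = ∑ i ∈ Finset.range (k - 1), g i := by
    rw [Finset.sum_Ico_eq_sum_range]
    exact Finset.sum_congr rfl fun i _ => by simp [g]; ring_nf
  rw [zetaK, hzeta, hfin, ← hsplit, hshift]
  ring

lemma slit (M : ℕ) (z : ℂ) (hz : ‖z‖ < M) : (M : ℂ) + z ∈ Complex.slitPlane := by
  refine Complex.mem_slitPlane_iff.mpr (Or.inl ?_)
  have h1 : |z.re| ≤ ‖z‖ := Complex.abs_re_le_norm z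
  have h2 := abs_le.mp h1
  simp only [Complex.add_re, Complex.natCast_re]
  linarith

lemma iterDeriv (M : ℕ) (w : ℂ) (n : ℕ) :
    ∀ z : ℂ, ‖z‖ < M →
      iteratedDeriv n (fun z => ((M : ℂ) + z) ^ w) z
        = (∏ j ∈ Finset.range n, (w - j)) * ((M : ℂ) + z) ^ (w - n) := by
  induction n with
  | zero => intro z hz; simp
  | succ n ih =>
    intro z hz
    have hev : iteratedDeriv n (fun z => ((M : ℂ) + z) ^ w)
        =ᶠ[nhds z] fun z => (∏ j ∈ Finset.range n, (w - j)) * ((M : ℂ) + z) ^ (w - n) := by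
      filter_upwards [Metric.isOpen_ball.mem_nhds (mem_ball_zero_iff.mpr hz)] with y hy
      exact ih y (mem_ball_zero_iff.mp hy)
    rw [iteratedDeriv_succ, hev.deriv_eq]
    have hd : HasDerivAt (fun z : ℂ => ((M : ℂ) + z) ^ (w - n))
        ((w - n) * ((M : ℂ) + z) ^ (w - n - 1) * 1) z :=
      (HasDerivAt.const_add (M : ℂ) (hasDerivAt_id z)).cpow_const (slit M z hz)
    rw [(hd.const_mul _).deriv]
    rw [Finset.prod_range_succ]
    have hexp : w - ((n : ℕ) + 1 : ℕ) = w - n - 1 := by push_cast; ring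
    rw [hexp]
    ring

lemma rowHasSum (M : ℕ) (hM : 1 ≤ M) (s α : ℂ) (hα : ‖α‖ < M) :
    HasSum (fun n : ℕ => (∏ j ∈ Finset.range n, (s + j)) * ((M : ℂ)) ^ (-(s + n))
        * ((-α) ^ n / (n.factorial : ℂ)))
      (((M : ℂ) + α) ^ (-s)) := by
  have hf : DifferentiableOn ℂ (fun z : ℂ => ((M : ℂ) + z) ^ (-s)) (Metric.ball 0 M) := by
    intro z hz
    have hz' : ‖z‖ < M := mem_ball_zero_iff.mp hz
    exact (((differentiableAt_const _).add differentiableAt_id).cpow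
      (differentiableAt_const _) (slit M z hz')).differentiableWithinAt
  have hz : α ∈ Metric.ball (0 : ℂ) M := mem_ball_zero_iff.mpr hα
  have H := Complex.hasSum_taylorSeries_on_ball hf hz
  have hfun : (fun n : ℕ => (∏ j ∈ Finset.range n, (s + j)) * ((M : ℂ)) ^ (-(s + n))
        * ((-α) ^ n / (n.factorial : ℂ)))
      = fun n : ℕ => (n.factorial : ℂ)⁻¹ • (α - 0) ^ n
          • iteratedDeriv n (fun z : ℂ => ((M : ℂ) + z) ^ (-s)) 0 := by
    funext n
    rw [iterDeriv M (-s) n 0 (by simpa using (Nat.cast_pos.mpr hM : (0:ℝ) < M))]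
    have h1 : ∏ j ∈ Finset.range n, (-s - (j : ℂ)) = (-1) ^ n * ∏ j ∈ Finset.range n, (s + j) := by
      calc ∏ j ∈ Finset.range n, (-s - (j : ℂ))
          = ∏ j ∈ Finset.range n, (-1) * (s + j) :=
            Finset.prod_congr rfl fun j _ => by ring
        _ = (-1) ^ n * ∏ j ∈ Finset.range n, (s + j) := by
            rw [Finset.prod_mul_distrib, Finset.prod_const, Finset.card_range]
    rw [h1]
    have h2 : -s - (n : ℂ) = -(s + n) := by ring
    rw [h2]
    simp only [smul_eq_mul, sub_zero, add_zero]
    rw [neg_pow α n]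
    ring
  rw [hfun]
  exact H

lemma hSummable (t q : ℝ) (ht : 0 ≤ t) (hq0 : 0 ≤ q) (hq : q < 1) :
    Summable (fun n : ℕ => (∏ j ∈ Finset.range n, (t + j)) * q ^ n / (n.factorial : ℝ)) := by
  set f : ℕ → ℝ := fun n => (∏ j ∈ Finset.range n, (t + j)) * q ^ n / (n.factorial : ℝ) with hf
  have hfnn : ∀ n, 0 ≤ f n := by
    intro n
    apply div_nonneg _ (by positivity)
    exact mul_nonneg (Finset.prod_nonneg fun j _ => by positivity) (by positivity)
  have hrec : ∀ n : ℕ, f (n + 1) = f n * ((t + n) * q / (n + 1)) := by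
    intro n
    simp only [hf, Finset.prod_range_succ, pow_succ, Nat.factorial_succ]
    push_cast
    field_simp
  set r : ℝ := (1 + q) / 2 with hr
  have hrq : q < r := by rw [hr]; linarith
  have hr1 : r < 1 := by rw [hr]; linarith
  refine summable_of_ratio_norm_eventually_le hr1 ?_
  rw [eventually_atTop]
  refine ⟨Nat.ceil (t * q / (r - q)), fun n hn => ?_⟩
  have hn' : t * q / (r - q) ≤ (n : ℝ) := le_trans (Nat.le_ceil _) (Nat.cast_le.mpr hn)
  have hd : 0 < r - q := by linarith
  have htq : t * q ≤ n * (r - q) := by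
    rw [div_le_iff₀ hd] at hn'
    linarith
  have hstep : (t + n) * q / (n + 1) ≤ r := by
    rw [div_le_iff₀ (by positivity)]
    nlinarith
  rw [Real.norm_of_nonneg (hfnn _), Real.norm_of_nonneg (hfnn _), hrec n]
  calc f n * ((t + n) * q / (n + 1)) ≤ f n * r :=
        mul_le_mul_of_nonneg_left hstep (hfnn n)
    _ = r * f n := mul_comm _ _

theorem stmt_0 (k : ℕ) (hk : 1 ≤ k) (s : ℂ) (hs : 1 < s.re)
    (α : ℂ) (hα : ‖α‖ < k) :
    (∀ n : ℕ, ((n : ℂ) + k + α) ≠ 0) ∧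
    Summable (fun n : ℕ => ((n : ℂ) + k + α) ^ (-s)) ∧
    ∑' n : ℕ, ((n : ℂ) + k + α) ^ (-s)
      = ∑' n : ℕ, c n k s * (-α) ^ n / (n.factorial : ℂ) := by
  have hk0 : (0:ℝ) < k := by exact_mod_cast hk
  -- part 1
  have h1 : ∀ n : ℕ, ((n : ℂ) + k + α) ≠ 0 := by
    intro n h
    have hα' : α = -((n : ℂ) + k) := by linear_combination h
    have habs : ‖α‖ = (n : ℝ) + k := by
      rw [hα', norm_neg]
      have hc : ((n : ℂ) + k) = ((n + k : ℕ) : ℂ) := by push_cast; ring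
      rw [hc, Complex.norm_natCast]
      push_cast; ring
    rw [habs] at hα
    have hn : (0:ℝ) ≤ (n : ℝ) := Nat.cast_nonneg n
    linarith
  set q : ℝ := ‖α‖ / k with hqdef
  have hq0 : 0 ≤ q := div_nonneg (norm_nonneg α) hk0.le
  have hq1 : q < 1 := (div_lt_one hk0).mpr hα
  set t : ℝ := ‖s‖ with htdef
  set a : ℕ → ℕ → ℂ := fun m n =>
    (∏ j ∈ Finset.range n, (s + j)) * ((m : ℂ) + k) ^ (-(s + n))
      * ((-α) ^ n / (n.factorial : ℂ)) with ha
  have hrow : ∀ m : ℕ, HasSum (a m) (((m : ℂ) + k + α) ^ (-s)) := by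
    intro m
    have h := rowHasSum (m + k) (hk.trans (Nat.le_add_left k m)) s α
      (hα.trans_le (by exact_mod_cast Nat.le_add_left k m))
    have hc : ((m + k : ℕ) : ℂ) = (m : ℂ) + k := by push_cast; ring
    rw [hc] at h
    exact h
  set b : ℕ → ℕ → ℝ := fun m n =>
    (∏ j ∈ Finset.range n, (t + j)) * q ^ n / (n.factorial : ℝ) * ((m : ℝ) + k) ^ (-s.re) with hb
  have hmk : ∀ m : ℕ, (0:ℝ) < (m : ℝ) + k := fun m => by positivity
  have hbound : ∀ m n : ℕ, ‖a m n‖ ≤ b m n := by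
    intro m n
    have hx := hmk m
    have base : ((m : ℂ) + k) = (((m : ℝ) + k : ℝ) : ℂ) := by push_cast; ring
    have h1' : ‖a m n‖ = (∏ j ∈ Finset.range n, ‖s + j‖)
        * (((m : ℝ) + k) ^ (-s.re) * (((m : ℝ) + k)⁻¹) ^ n)
        * (‖α‖ ^ n / (n.factorial : ℝ)) := by
      rw [ha]
      simp only [norm_mul, norm_div, norm_pow, norm_neg]
      rw [norm_prod, base, Complex.norm_cpow_eq_rpow_re_of_pos hx]
      have hre : (-(s + (n : ℂ))).re = -s.re + -(n : ℝ) := by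
        simp [Complex.neg_re, Complex.add_re, Complex.natCast_re]; ring
      rw [hre, Real.rpow_add hx, Real.rpow_neg hx.le ((n : ℕ) : ℝ), Real.rpow_natCast, ← inv_pow]
      rw [Complex.norm_natCast]
    rw [h1', hb]
    have hfrac : ‖α‖ * ((m : ℝ) + k)⁻¹ ≤ q := by
      rw [← div_eq_mul_inv, hqdef]
      exact div_le_div_of_nonneg_left (norm_nonneg α) hk0
        (by simp)
    calc (∏ j ∈ Finset.range n, ‖s + j‖)
          * (((m : ℝ) + k) ^ (-s.re) * (((m : ℝ) + k)⁻¹) ^ n)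
          * (‖α‖ ^ n / (n.factorial : ℝ))
        = (∏ j ∈ Finset.range n, ‖s + j‖)
          * (‖α‖ * ((m : ℝ) + k)⁻¹) ^ n / (n.factorial : ℝ)
          * ((m : ℝ) + k) ^ (-s.re) := by rw [mul_pow]; ring
      _ ≤ (∏ j ∈ Finset.range n, (t + j)) * q ^ n / (n.factorial : ℝ)
          * ((m : ℝ) + k) ^ (-s.re) := by
          gcongr with j hj
          · calc ‖s + j‖ ≤ ‖s‖ + ‖(j : ℂ)‖ := norm_add_le _ _
              _ = t + j := by rw [Complex.norm_natCast]

  have hSig : Summable (fun m : ℕ => ((m : ℝ) + k) ^ (-s.re)) := by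
    have h0 : Summable (fun m : ℕ => ((m : ℝ) ^ s.re)⁻¹) :=
      Real.summable_nat_rpow_inv.mpr hs
    have h1' := (summable_nat_add_iff k).mpr h0
    refine h1'.congr fun m => ?_
    have : ((m + k : ℕ) : ℝ) = (m : ℝ) + k := by push_cast; ring
    rw [this, ← Real.rpow_neg (hmk m).le]
  have hbsum : Summable (fun p : ℕ × ℕ => b p.1 p.2) := by
    refine (summable_prod_of_nonneg ?_).mpr ⟨fun m => ?_, ?_⟩
    · intro p
      rw [hb]
      have := (hmk p.1).le
      positivity
    · simp only [hb]
      exact (hSummable t q (norm_nonneg s) hq0 hq1).mul_right _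
    · refine ((hSig.mul_left
        (∑' n : ℕ, (∏ j ∈ Finset.range n, (t + j)) * q ^ n / (n.factorial : ℝ))).congr
        fun m => ?_)
      exact (tsum_mul_right).symm
  have hA : Summable (fun p : ℕ × ℕ => a p.1 p.2) :=
    Summable.of_norm_bounded hbsum fun p => hbound p.1 p.2
  have hmain : HasSum (fun m : ℕ => ((m : ℂ) + k + α) ^ (-s)) (∑' p : ℕ × ℕ, a p.1 p.2) :=
    HasSum.prod_fiberwise hA.hasSum hrow
  refine ⟨h1, hmain.summable, ?_⟩
  rw [hmain.tsum_eq]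
  have hswap : ∑' p : ℕ × ℕ, a p.1 p.2 = ∑' n : ℕ, ∑' m : ℕ, a m n := by
    rw [Summable.tsum_prod' hA fun m => hA.prod_factor m]
    exact (Summable.tsum_comm' (f := a) hA (fun m => hA.prod_factor m) (fun n => hA.prod_symm.prod_factor n)).symm
  rw [hswap]
  refine tsum_congr fun n => ?_
  have hre : 1 < (s + (n : ℂ)).re := by
    have : (s + (n : ℂ)).re = s.re + (n : ℝ) := by
      simp [Complex.add_re, Complex.natCast_re]
    rw [this]
    have := Nat.cast_nonneg (α := ℝ) n
    linarith
  have hinner : ∑' m : ℕ, a m n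
      = (∏ j ∈ Finset.range n, (s + j))
        * (zetaK k (s + n) * ((-α) ^ n / (n.factorial : ℂ))) := by
    have hc : ∀ m : ℕ, a m n = (∏ j ∈ Finset.range n, (s + j))
        * (((m : ℂ) + k) ^ (-(s + n)) * ((-α) ^ n / (n.factorial : ℂ))) := fun m => by
      rw [ha]; ring
    rw [tsum_congr hc, tsum_mul_left, tsum_mul_right, ← zetaK_eq_tsum k hk (s + n) hre]
  rw [hinner, c]
  ring
end

section
/- Let k ≥ 1 be an integer, let s be a complex number with Re s > 1, and let α be a complex number with |α| < k. Then the series Σ_{n≥0} c_{n,k}(s)·(−α)^n/n! is (absolutely) summable, i.e. the function n ↦ c_{n,k}(s)·(−α)^n/n! is summable on ℕ. -/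
open Complex Filter Finset

lemma my_summable_cpow {s : ℂ} (hs : 1 < s.re) :
    Summable (fun n : ℕ => (n : ℂ) ^ (-s)) := by
  have := Complex.summable_one_div_nat_cpow.mpr hs
  simpa [cpow_neg, one_div] using this

lemma my_zetaK_eq_tsum (k : ℕ) (hk : 1 ≤ k) {s : ℂ} (hs : 1 < s.re) :
    zetaK k s = ∑' m : ℕ, ((m + k : ℕ) : ℂ) ^ (-s) := by
  have hsum := my_summable_cpow hs
  have hzeta : riemannZeta s = ∑' n : ℕ, (n : ℂ) ^ (-s) := by
    rw [zeta_eq_tsum_one_div_nat_cpow hs]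
    simp [cpow_neg, one_div]
  have hsplit := Summable.sum_add_tsum_nat_add (f := fun n : ℕ => (n : ℂ) ^ (-s)) k hsum
  have hrange : ∑ i ∈ Finset.range k, (i : ℂ) ^ (-s)
      = ∑ m ∈ Finset.Ico 1 k, (m : ℂ) ^ (-s) := by
    rw [Finset.range_eq_Ico, Finset.sum_eq_sum_Ico_succ_bot hk]
    have : ((0 : ℕ) : ℂ) ^ (-s) = 0 := by
      rw [Nat.cast_zero, Complex.zero_cpow]
      intro h
      rw [neg_eq_zero] at h
      rw [h] at hs
      norm_num at hs
    rw [this, zero_add, zero_add]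
  rw [zetaK, hzeta, ← hsplit, hrange]
  ring

lemma my_summable_rpow_shift (k : ℕ) {p : ℝ} (hp : p < -1) :
    Summable (fun m : ℕ => ((m + k : ℕ) : ℝ) ^ p) := by
  have h := Real.summable_nat_rpow.mpr hp
  exact (summable_nat_add_iff k).mpr h

lemma my_norm_zetaK_le (k : ℕ) (hk : 1 ≤ k) {s : ℂ} (hs : 1 < s.re) :
    ‖zetaK k s‖ ≤ ∑' m : ℕ, ((m + k : ℕ) : ℝ) ^ (-s.re) := by
  rw [my_zetaK_eq_tsum k hk hs]
  have hnorm : ∀ m : ℕ, ‖((m + k : ℕ) : ℂ) ^ (-s)‖ = ((m + k : ℕ) : ℝ) ^ (-s.re) := by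
    intro m
    have hpos : (0 : ℝ) < ((m + k : ℕ) : ℝ) := by
      have : 0 < m + k := by omega
      exact_mod_cast this
    rw [show ((m + k : ℕ) : ℂ) = (((m + k : ℕ) : ℝ) : ℂ) by push_cast; ring,
      Complex.norm_cpow_eq_rpow_re_of_pos hpos, Complex.neg_re]
  have hsum : Summable fun m : ℕ => ‖((m + k : ℕ) : ℂ) ^ (-s)‖ := by
    simp only [hnorm]
    exact my_summable_rpow_shift k (by linarith)
  calc ‖∑' m : ℕ, ((m + k : ℕ) : ℂ) ^ (-s)‖ ≤ ∑' m : ℕ, ‖((m + k : ℕ) : ℂ) ^ (-s)‖ :=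
        norm_tsum_le_tsum_norm hsum
    _ = ∑' m : ℕ, ((m + k : ℕ) : ℝ) ^ (-s.re) := by simp only [hnorm]

theorem stmt_1 (k : ℕ) (hk : 1 ≤ k) (s : ℂ) (hs : 1 < s.re)
    (α : ℂ) (hα : ‖α‖ < k) :
    Summable (fun n : ℕ => c n k s * (-α) ^ n / (n.factorial : ℂ)) := by
  set σ := s.re with hσ
  set C : ℝ := ∑' m : ℕ, ((m + k : ℕ) : ℝ) ^ (-σ) with hC
  have hkpos : (0 : ℝ) < k := by exact_mod_cast hk
  have hC0 : 0 ≤ C := tsum_nonneg fun m => Real.rpow_nonneg (by positivity) _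
  set r : ℝ := (‖α‖ / k + 1) / 2 with hr
  have hx0 : 0 ≤ ‖α‖ / k := div_nonneg (norm_nonneg α) hkpos.le
  have hx1 : ‖α‖ / k < 1 := (div_lt_one hkpos).mpr hα
  have hr0 : 0 < r := by rw [hr]; linarith
  have hr1 : r < 1 := by rw [hr]; linarith
  have hxr : ‖α‖ / k ≤ r := by rw [hr]; linarith
  have hs1 : (1 : ℝ) < ‖s‖ := by
    exact lt_of_lt_of_le hs ((le_abs_self _).trans (Complex.abs_re_le_norm s))
  -- bound on zetaK (s + n)
  have hzeta_bound : ∀ n : ℕ, ‖zetaK k (s + n)‖ ≤ C * ((k : ℝ)⁻¹) ^ n := by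
    intro n
    have hre : 1 < (s + n).re := by
      simp only [Complex.add_re, Complex.natCast_re]
      have : (0:ℝ) ≤ n := n.cast_nonneg
      linarith
    have h1 := my_norm_zetaK_le k hk hre
    have hre_eq : (s + n).re = σ + n := by simp [hσ]
    have h2 : ∀ m : ℕ, ((m + k : ℕ) : ℝ) ^ (-(σ + n))
        ≤ ((m + k : ℕ) : ℝ) ^ (-σ) * ((k : ℝ)⁻¹) ^ n := by
      intro m
      have hpos : (0 : ℝ) < ((m + k : ℕ) : ℝ) := by
        have : 0 < m + k := by omega
        exact_mod_cast this
      have hmk : (k : ℝ) ≤ ((m + k : ℕ) : ℝ) := by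
        push_cast; linarith [Nat.cast_nonneg (α := ℝ) m]
      have e1 : ((m + k : ℕ) : ℝ) ^ (-(σ + n))
          = ((m + k : ℕ) : ℝ) ^ (-σ) * ((m + k : ℕ) : ℝ) ^ (-(n:ℝ)) := by
        rw [← Real.rpow_add hpos]; ring_nf
      rw [e1]
      have e2 : ((m + k : ℕ) : ℝ) ^ (-(n:ℝ)) ≤ (k : ℝ) ^ (-(n:ℝ)) :=
        Real.rpow_le_rpow_of_nonpos hkpos hmk (neg_nonpos.mpr n.cast_nonneg)
      have e3 : (k : ℝ) ^ (-(n:ℝ)) = ((k : ℝ)⁻¹) ^ n := by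
        rw [Real.rpow_neg hkpos.le, Real.rpow_natCast, inv_pow]
      have := le_trans e2 (le_of_eq e3)
      exact mul_le_mul_of_nonneg_left this (Real.rpow_nonneg hpos.le _)
    have hsumL : Summable (fun m : ℕ => ((m + k : ℕ) : ℝ) ^ (-(σ + n))) :=
      my_summable_rpow_shift k (by have : (0:ℝ) ≤ n := n.cast_nonneg; linarith)
    have hsumR : Summable (fun m : ℕ => ((m + k : ℕ) : ℝ) ^ (-σ) * ((k : ℝ)⁻¹) ^ n) :=
      (my_summable_rpow_shift k (by linarith)).mul_right _
    have h3 : ∑' m : ℕ, ((m + k : ℕ) : ℝ) ^ (-(σ + n))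
        ≤ ∑' m : ℕ, ((m + k : ℕ) : ℝ) ^ (-σ) * ((k : ℝ)⁻¹) ^ n :=
      Summable.tsum_le_tsum h2 hsumL hsumR
    rw [tsum_mul_right] at h3
    calc ‖zetaK k (s + n)‖ ≤ ∑' m : ℕ, ((m + k : ℕ) : ℝ) ^ (-(s+n).re) := h1
      _ = ∑' m : ℕ, ((m + k : ℕ) : ℝ) ^ (-(σ + n)) := by rw [hre_eq]
      _ ≤ C * ((k : ℝ)⁻¹) ^ n := h3
  -- the comparison sequence
  set b : ℕ → ℝ := fun n => (C + 1) * (∏ j ∈ Finset.range n, (‖s‖ + j)) * r ^ n / n.factorial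
    with hb
  have hbpos : ∀ n, 0 < b n := by
    intro n
    apply div_pos
    · apply mul_pos
      apply mul_pos (by linarith)
      · exact Finset.prod_pos fun j _ => by positivity
      · exact pow_pos hr0 n
    · exact_mod_cast n.factorial_pos
  -- norm bound
  have hle : ∀ n : ℕ, ‖c n k s * (-α) ^ n / (n.factorial : ℂ)‖ ≤ b n := by
    intro n
    rw [norm_div, norm_mul, norm_pow, norm_neg]
    have hfact : ‖((n.factorial : ℕ) : ℂ)‖ = (n.factorial : ℝ) := by
      simp
    rw [hfact]
    have hprod : ‖∏ j ∈ Finset.range n, (s + (j:ℂ))‖ ≤ ∏ j ∈ Finset.range n, (‖s‖ + j) := by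
      refine le_trans (norm_prod_le _ _) ?_
      apply Finset.prod_le_prod (fun j _ => norm_nonneg _)
      intro j _
      refine le_trans (norm_add_le _ _) ?_
      simp
    have hcnorm : ‖c n k s‖ ≤ (∏ j ∈ Finset.range n, (‖s‖ + j)) * (C * ((k:ℝ)⁻¹) ^ n) := by
      rw [c, norm_mul]
      exact mul_le_mul hprod (hzeta_bound n) (norm_nonneg _)
        (Finset.prod_nonneg fun j _ => by positivity)
    have hαn : ‖α‖ ^ n ≤ (‖α‖) ^ n := le_of_eq rfl
    have key : ‖c n k s‖ * ‖α‖ ^ n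
        ≤ (∏ j ∈ Finset.range n, (‖s‖ + j)) * (C * ((k:ℝ)⁻¹) ^ n) * (‖α‖) ^ n :=
      mul_le_mul hcnorm hαn (by positivity) (by positivity)
    rw [hb]
    have hfactpos : (0:ℝ) < n.factorial := by exact_mod_cast n.factorial_pos
    rw [div_le_div_iff_of_pos_right hfactpos]
    refine le_trans key ?_
    have e : (∏ j ∈ Finset.range n, (‖s‖ + j)) * (C * ((k:ℝ)⁻¹) ^ n) * (‖α‖) ^ n
        = C * (∏ j ∈ Finset.range n, (‖s‖ + j)) * (‖α‖ / k) ^ n := by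
      rw [div_pow, inv_pow]
      ring
    rw [e]
    have h4 : (‖α‖ / k) ^ n ≤ r ^ n := pow_le_pow_left₀ hx0 hxr n
    have hP : (0:ℝ) ≤ ∏ j ∈ Finset.range n, (‖s‖ + j) :=
      Finset.prod_nonneg fun j _ => by positivity
    calc C * (∏ j ∈ Finset.range n, (‖s‖ + j)) * (‖α‖ / k) ^ n
        ≤ C * (∏ j ∈ Finset.range n, (‖s‖ + j)) * r ^ n := by
          apply mul_le_mul_of_nonneg_left h4 (by positivity)
      _ ≤ (C + 1) * (∏ j ∈ Finset.range n, (‖s‖ + j)) * r ^ n := by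
          apply mul_le_mul_of_nonneg_right _ (pow_nonneg hr0.le n)
          apply mul_le_mul_of_nonneg_right _ hP
          linarith
  -- summability of b via ratio test
  have hbsum : Summable b := by
    apply summable_of_ratio_test_tendsto_lt_one hr1
      (Filter.Eventually.of_forall fun n => (hbpos n).ne')
    have hratio : ∀ n : ℕ, ‖b (n+1)‖ / ‖b n‖ = ((‖s‖ - 1) / ((n:ℝ) + 1) + 1) * r := by
      intro n
      have hfactne : ((n.factorial : ℝ)) ≠ 0 := by
        exact_mod_cast n.factorial_pos.ne'
      have hn1 : ((n:ℝ) + 1) ≠ 0 := by positivity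
      have key : b (n+1) = b n * (((‖s‖ - 1) / ((n:ℝ) + 1) + 1) * r) := by
        rw [hb]
        simp only [Finset.prod_range_succ, pow_succ, Nat.factorial_succ, Nat.cast_mul,
          Nat.cast_add, Nat.cast_one]
        field_simp
        ring
      rw [Real.norm_of_nonneg (hbpos (n+1)).le, Real.norm_of_nonneg (hbpos n).le, key]
      exact mul_div_cancel_left₀ _ (hbpos n).ne'
    simp only [hratio]
    have h0 : Filter.Tendsto (fun n : ℕ => (‖s‖ - 1) / ((n:ℝ) + 1)) atTop (nhds 0) := by
      have := (tendsto_const_div_atTop_nhds_zero_nat (‖s‖ - 1)).comp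
        (Filter.tendsto_add_atTop_nat 1)
      simp only [Function.comp_def, Nat.cast_add, Nat.cast_one] at this
      exact this
    have h1 : Filter.Tendsto (fun n : ℕ => (‖s‖ - 1) / ((n:ℝ) + 1) + 1) atTop (nhds 1) := by
      simpa using h0.add tendsto_const_nhds
    have := h1.mul_const r
    simpa using this
  exact Summable.of_norm_bounded hbsum hle
end

section
/- Let k ≥ 1 and n ≥ 0 be integers and let s be a complex number with σ = Re s > 1. Then k^n · |c_{n,k}(s)| / n! ≤ (∏_{j=0}^{n−1}(|s|+j) / n!) · Σ_{m≥k} m^{−σ}, where |s| is the complex absolute value of s, |c_{n,k}(s)| is the complex absolute value of c_{n,k}(s), and Σ_{m≥k} m^{−σ} = Σ'_{m∈ℕ} ((m+k):ℝ)^{−σ} (real powers via Real.rpow). -/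
lemma zetaK_eq (k : ℕ) {w : ℂ} (hw : 1 < w.re) :
    zetaK k w = ∑' m : ℕ, 1 / ((m + k : ℕ) : ℂ) ^ w := by
  have hsum : Summable (fun n : ℕ => 1 / (n : ℂ) ^ w) :=
    Complex.summable_one_div_nat_cpow.mpr hw
  have hsplit := Summable.sum_add_tsum_nat_add k hsum
  rw [zetaK, zeta_eq_tsum_one_div_nat_cpow hw, ← hsplit]
  have h0 : w ≠ 0 := fun h => by simp [h] at hw; linarith
  have : ∑ m ∈ Finset.Ico 1 k, (m : ℂ) ^ (-w) = ∑ i ∈ Finset.range k, 1 / (i : ℂ) ^ w := by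
    rw [Finset.range_eq_Ico]
    rw [Finset.sum_subset (Finset.Ico_subset_Ico (Nat.zero_le 1) le_rfl)]
    · exact Finset.sum_congr rfl fun m _ => by rw [Complex.cpow_neg, one_div]
    · intro x hx hx'
      simp only [Finset.mem_Ico] at hx hx'
      have : x = 0 := by omega
      simp [this, Complex.zero_cpow (neg_ne_zero.mpr h0)]
  rw [this]; ring

theorem stmt_2 (k : ℕ) (hk : 1 ≤ k) (n : ℕ) (s : ℂ) (hs : 1 < s.re) :
    (k : ℝ) ^ n * ‖c n k s‖ / (n.factorial : ℝ)
      ≤ (∏ j ∈ Finset.range n, (‖s‖ + j)) / (n.factorial : ℝ) *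
        ∑' m : ℕ, ((m : ℝ) + k) ^ (-s.re) := by
  set σ := s.re with hσ
  set w := s + (n : ℂ) with hwdef
  have hwre : w.re = σ + n := by simp [hwdef, hσ]
  have hw : 1 < w.re := by rw [hwre]; have : (0:ℝ) ≤ n := Nat.cast_nonneg n; linarith
  have hkpos : (0:ℝ) < k := by exact_mod_cast hk
  -- summabilities
  have hsumσ : Summable (fun m : ℕ => ((m : ℝ) + k) ^ (-σ)) := by
    have h1 : Summable (fun m : ℕ => ((m : ℝ)) ^ (-σ)) :=
      (Real.summable_nat_rpow (p := -σ)).mpr (by linarith)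
    have := (summable_nat_add_iff (f := fun m : ℕ => ((m : ℝ)) ^ (-σ)) k).mpr h1
    refine this.congr fun m => ?_
    push_cast
    ring_nf
  have hg : ∀ m : ℕ, ‖1 / ((m + k : ℕ) : ℂ) ^ w‖ = (((m + k : ℕ)) : ℝ) ^ (-w.re) := by
    intro m
    have hpos : (0:ℝ) < ((m + k : ℕ) : ℝ) := Nat.cast_pos.mpr (by omega)
    rw [norm_div, norm_one, ← Complex.ofReal_natCast,
      Complex.norm_cpow_eq_rpow_re_of_pos hpos, one_div, ← Real.rpow_neg hpos.le]
  -- bound on the zeta tail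
  have hzeta : (k : ℝ) ^ n * ‖zetaK k w‖ ≤ ∑' m : ℕ, ((m : ℝ) + k) ^ (-σ) := by
    rw [zetaK_eq k hw]
    have hsumg : Summable (fun m : ℕ => (((m + k : ℕ)) : ℝ) ^ (-w.re)) := by
      refine hsumσ.of_nonneg_of_le (fun m => by positivity) fun m => ?_
      have hb : (1:ℝ) ≤ (m : ℝ) + k := by
        have h1 : (1:ℝ) ≤ (k:ℝ) := by exact_mod_cast hk
        have h2 : (0:ℝ) ≤ (m:ℝ) := Nat.cast_nonneg m
        linarith
      have : (((m + k : ℕ)) : ℝ) = (m : ℝ) + k := by push_cast; ring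
      rw [this]
      exact Real.rpow_le_rpow_of_exponent_le hb (by rw [hwre]; have : (0:ℝ) ≤ n := Nat.cast_nonneg n; linarith)
    have habs : ‖∑' m : ℕ, 1 / ((m + k : ℕ) : ℂ) ^ w‖
        ≤ ∑' m : ℕ, (((m + k : ℕ)) : ℝ) ^ (-w.re) := by
      have := norm_tsum_le_tsum_norm (f := fun m : ℕ => 1 / ((m + k : ℕ) : ℂ) ^ w)
        (by simpa only [hg] using hsumg)
      simpa only [hg] using this
    calc (k : ℝ) ^ n * ‖∑' m : ℕ, 1 / ((m + k : ℕ) : ℂ) ^ w‖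
        ≤ (k : ℝ) ^ n * ∑' m : ℕ, (((m + k : ℕ)) : ℝ) ^ (-w.re) := by
          exact mul_le_mul_of_nonneg_left habs (by positivity)
      _ = ∑' m : ℕ, (k : ℝ) ^ n * (((m + k : ℕ)) : ℝ) ^ (-w.re) := tsum_mul_left.symm
      _ ≤ ∑' m : ℕ, ((m : ℝ) + k) ^ (-σ) := by
          refine Summable.tsum_le_tsum (fun m => ?_) (hsumg.mul_left _) hsumσ
          have hmk : (((m + k : ℕ)) : ℝ) = (m : ℝ) + k := by push_cast; ring
          have hpos : (0:ℝ) < (m : ℝ) + k := by have : (0:ℝ) ≤ (m:ℝ) := Nat.cast_nonneg m; linarith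
          rw [hmk, hwre, neg_add, Real.rpow_add hpos, ← mul_assoc]
          have h1 : (k : ℝ) ^ n * ((m : ℝ) + k) ^ (-(n:ℝ)) ≤ 1 := by
            rw [Real.rpow_neg hpos.le, Real.rpow_natCast, ← div_eq_mul_inv,
              div_le_one (by positivity)]
            exact pow_le_pow_left₀ hkpos.le (by linarith [Nat.cast_nonneg (α := ℝ) m]) n
          calc (k : ℝ) ^ n * ((m : ℝ) + k) ^ (-σ) * ((m : ℝ) + k) ^ (-(n:ℝ))
              = (k : ℝ) ^ n * ((m : ℝ) + k) ^ (-(n:ℝ)) * ((m : ℝ) + k) ^ (-σ) := by ring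
            _ ≤ 1 * ((m : ℝ) + k) ^ (-σ) := mul_le_mul_of_nonneg_right h1 (by positivity)
            _ = ((m : ℝ) + k) ^ (-σ) := one_mul _
  -- product bound
  have hprod : ‖∏ j ∈ Finset.range n, (s + j)‖
      ≤ ∏ j ∈ Finset.range n, (‖s‖ + j) := by
    rw [norm_prod]
    refine Finset.prod_le_prod (fun j _ => by positivity) fun j _ => ?_
    calc ‖s + j‖ ≤ ‖s‖ + ‖(j : ℂ)‖ := norm_add_le _ _
      _ = ‖s‖ + j := by rw [Complex.norm_natCast]
  -- conclude
  have hT : 0 ≤ ∑' m : ℕ, ((m : ℝ) + k) ^ (-σ) := tsum_nonneg fun m => by positivity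
  have key : (k : ℝ) ^ n * ‖c n k s‖
      ≤ (∏ j ∈ Finset.range n, (‖s‖ + j)) * ∑' m : ℕ, ((m : ℝ) + k) ^ (-σ) := by
    rw [c, norm_mul]
    calc (k:ℝ)^n * (‖∏ j ∈ Finset.range n, (s + j)‖ * ‖zetaK k w‖)
        = ‖∏ j ∈ Finset.range n, (s + j)‖
            * ((k:ℝ)^n * ‖zetaK k w‖) := by ring
      _ ≤ (∏ j ∈ Finset.range n, (‖s‖ + j)) * ∑' m : ℕ, ((m : ℝ) + k) ^ (-σ) :=
          mul_le_mul hprod hzeta (by positivity)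
            (Finset.prod_nonneg fun j _ => by positivity)
  rw [div_mul_eq_mul_div]
  exact div_le_div_of_nonneg_right key (Nat.cast_pos.mpr n.factorial_pos).le
end

section
/- Let r ≥ 1 be an integer, let α be a real number with 0 < α < 1, and let G : ℝ → ℂ → ℂ be such that for every x with 0 < x < 1 the function G x is entire (Differentiable ℂ (G x)) and G x w = ζ(w,x) − 1/(w−1) for all w ≠ 1; set γ_r(x) = iteratedDeriv r (G x) 1 / r!. Then the function x ↦ γ_r(x) has derivative −ζ^{(r−1)}(2,α)/(r−1)! − ζ^{(r)}(2,α)/r! at x = α; i.e. HasDerivAt (fun x : ℝ => iteratedDeriv r (G x) 1 / r!) (−(iteratedDeriv (r−1) (fun w => ζ(w,α)) 2)/(r−1)! − (iteratedDeriv r (fun w => ζ(w,α)) 2)/r!) α. -/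
open Complex Filter Set Metric Topology

namespace Stmt14Aux

noncomputable def DD (x : ℝ) (n k : ℕ) (s : ℂ) : ℂ :=
  (-((Real.log ((n : ℝ) + x) : ℝ) : ℂ)) ^ k *
    Complex.exp (s * -((Real.log ((n : ℝ) + x) : ℝ) : ℂ))

lemma rpow_neg_mono {a b σ : ℝ} (ha : 0 < a) (hab : a ≤ b) (hσ : 0 ≤ σ) :
    b ^ (-σ) ≤ a ^ (-σ) := by
  rw [Real.rpow_neg ha.le, Real.rpow_neg (ha.trans_le hab).le]
  exact inv_anti₀ (Real.rpow_pos_of_pos ha σ) (Real.rpow_le_rpow ha.le hab hσ)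

lemma log_abs_bound {m : ℝ} (hm0 : 0 < m) {n : ℕ} {b : ℝ} (hmb : m ≤ b)
    (hb : b ≤ (n : ℝ) + 2) : |Real.log b| ≤ |Real.log m| + Real.log ((n : ℝ) + 2) := by
  have hb0 : 0 < b := hm0.trans_le hmb
  have h1 : Real.log b ≤ Real.log ((n : ℝ) + 2) := Real.log_le_log hb0 hb
  have h2 : Real.log m ≤ Real.log b := Real.log_le_log hm0 hmb
  have h3 : (0 : ℝ) ≤ Real.log ((n : ℝ) + 2) := by
    apply Real.log_nonneg; linarith [Nat.cast_nonneg (α := ℝ) n]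
  have h4 := neg_abs_le (Real.log m)
  rw [abs_le]
  constructor <;> [linarith; linarith [abs_nonneg (Real.log m)]]

lemma rpow_base_bound {m b σ₁ σ₂ σ : ℝ} (hm0 : 0 < m) (hm1 : m ≤ 1) (hmb : m ≤ b)
    (hσ0 : 0 < σ₁) (h1 : σ₁ ≤ σ) (h2 : σ ≤ σ₂) :
    b ^ (-σ) ≤ m ^ (-σ₂) * b ^ (-σ₁) := by
  have hb0 : 0 < b := hm0.trans_le hmb
  have hσ₂ : 0 < σ₂ := hσ0.trans_le (h1.trans h2)
  rcases le_or_gt 1 b with hb1 | hb1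
  · have e1 : b ^ (-σ) ≤ b ^ (-σ₁) :=
      Real.rpow_le_rpow_of_exponent_le hb1 (by linarith)
    have e2 : (1 : ℝ) ≤ m ^ (-σ₂) :=
      Real.one_le_rpow_of_pos_of_le_one_of_nonpos hm0 hm1 (by linarith)
    calc b ^ (-σ) ≤ b ^ (-σ₁) := e1
      _ = 1 * b ^ (-σ₁) := (one_mul _).symm
      _ ≤ m ^ (-σ₂) * b ^ (-σ₁) :=
        mul_le_mul_of_nonneg_right e2 (Real.rpow_nonneg hb0.le _)
  · have e0 : b ^ (-σ) = b ^ (σ₁ - σ) * b ^ (-σ₁) := by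
      rw [← Real.rpow_add hb0]; ring_nf
    have e1 : b ^ (σ₁ - σ) ≤ m ^ (σ₁ - σ) := by
      have := rpow_neg_mono hm0 hmb (by linarith : (0:ℝ) ≤ σ - σ₁)
      rwa [show -(σ - σ₁) = σ₁ - σ by ring] at this
    have e2 : m ^ (σ₁ - σ) ≤ m ^ (-σ₂) :=
      Real.rpow_le_rpow_of_exponent_ge hm0 hm1 (by linarith)
    calc b ^ (-σ) = b ^ (σ₁ - σ) * b ^ (-σ₁) := e0
      _ ≤ m ^ (-σ₂) * b ^ (-σ₁) :=
        mul_le_mul_of_nonneg_right (e1.trans e2) (Real.rpow_nonneg hb0.le _)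

lemma key_bound {m : ℝ} (hm0 : 0 < m) (hm1 : m ≤ 1) {u : ℝ} (hu1 : m ≤ u) (hu2 : u ≤ 1)
    {σ₁ σ₂ S : ℝ} (hσ0 : 0 < σ₁) {s : ℂ} (h1 : σ₁ ≤ s.re) (h2 : s.re ≤ σ₂) (hS : ‖s‖ ≤ S)
    (k n : ℕ) :
    ‖-(((((n : ℝ) + u)⁻¹ : ℝ)) : ℂ) *
        ((k : ℂ) * (-((Real.log ((n : ℝ) + u) : ℝ) : ℂ)) ^ (k - 1)
          + s * (-((Real.log ((n : ℝ) + u) : ℝ) : ℂ)) ^ k) *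
        Complex.exp (s * -((Real.log ((n : ℝ) + u) : ℝ) : ℂ))‖
      ≤ ((k : ℝ) + S) * m ^ (-σ₂) *
        ((1 + |Real.log m| + Real.log ((n : ℝ) + 2)) ^ k * ((n : ℝ) + m) ^ (-(σ₁ + 1))) := by
  have hn0 : (0:ℝ) ≤ (n : ℝ) := Nat.cast_nonneg n
  have hb0 : (0:ℝ) < (n : ℝ) + u := by linarith
  have hnm0 : (0:ℝ) < (n : ℝ) + m := by linarith
  have hmb : m ≤ (n : ℝ) + u := by linarith
  have hbn : (n : ℝ) + u ≤ (n : ℝ) + 2 := by linarith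
  set l : ℝ := Real.log ((n : ℝ) + u) with hl
  set Λ : ℝ := 1 + |Real.log m| + Real.log ((n : ℝ) + 2) with hΛ
  have hΛ0 : |Real.log m| + Real.log ((n : ℝ) + 2) ≤ Λ := by rw [hΛ]; linarith
  have hlΛ : |l| ≤ Λ := (log_abs_bound hm0 hmb hbn).trans hΛ0
  have hΛ1 : (1:ℝ) ≤ Λ := by
    have h3 : (0 : ℝ) ≤ Real.log ((n : ℝ) + 2) := Real.log_nonneg (by linarith)
    rw [hΛ]; linarith [abs_nonneg (Real.log m)]
  have hΛnn : (0:ℝ) ≤ Λ := by linarith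
  have hS0 : (0:ℝ) ≤ S := (norm_nonneg s).trans hS
  -- norm of the exponential
  have hexp : ‖Complex.exp (s * -((l : ℝ) : ℂ))‖ = ((n : ℝ) + u) ^ (-s.re) := by
    rw [Complex.norm_exp]
    have : (s * -((l : ℝ) : ℂ)).re = l * (-s.re) := by
      simp [Complex.mul_re]; ring
    rw [this, hl, Real.rpow_def_of_pos hb0]
  -- norm of the middle factor
  have hmid : ‖(k : ℂ) * (-((l : ℝ) : ℂ)) ^ (k - 1) + s * (-((l : ℝ) : ℂ)) ^ k‖
      ≤ ((k : ℝ) + S) * Λ ^ k := by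
    have hnl : ‖(-((l : ℝ) : ℂ))‖ = |l| := by
      rw [norm_neg, Complex.norm_real, Real.norm_eq_abs]
    have e1 : ‖(k : ℂ) * (-((l : ℝ) : ℂ)) ^ (k - 1)‖ ≤ (k : ℝ) * Λ ^ k := by
      rw [norm_mul, norm_pow, hnl, Complex.norm_natCast]
      apply mul_le_mul_of_nonneg_left _ (Nat.cast_nonneg k)
      calc |l| ^ (k - 1) ≤ Λ ^ (k - 1) := pow_le_pow_left₀ (abs_nonneg l) hlΛ _
        _ ≤ Λ ^ k := pow_le_pow_right₀ hΛ1 (Nat.sub_le k 1)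
    have e2 : ‖s * (-((l : ℝ) : ℂ)) ^ k‖ ≤ S * Λ ^ k := by
      rw [norm_mul, norm_pow, hnl]
      apply mul_le_mul hS (pow_le_pow_left₀ (abs_nonneg l) hlΛ _) (by positivity) hS0
    calc ‖(k : ℂ) * (-((l : ℝ) : ℂ)) ^ (k - 1) + s * (-((l : ℝ) : ℂ)) ^ k‖
        ≤ ‖(k : ℂ) * (-((l : ℝ) : ℂ)) ^ (k - 1)‖ + ‖s * (-((l : ℝ) : ℂ)) ^ k‖ :=
          norm_add_le _ _
      _ ≤ (k : ℝ) * Λ ^ k + S * Λ ^ k := add_le_add e1 e2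
      _ = ((k : ℝ) + S) * Λ ^ k := by ring
  have hinv : ‖-(((((n : ℝ) + u)⁻¹ : ℝ)) : ℂ)‖ = ((n : ℝ) + u)⁻¹ := by
    rw [norm_neg, Complex.norm_real, Real.norm_eq_abs, abs_of_pos (by positivity)]
  have hre : ((n : ℝ) + u) ^ (-s.re) ≤ m ^ (-σ₂) * ((n : ℝ) + m) ^ (-σ₁) := by
    calc ((n : ℝ) + u) ^ (-s.re) ≤ m ^ (-σ₂) * ((n : ℝ) + u) ^ (-σ₁) :=
        rpow_base_bound hm0 hm1 hmb hσ0 h1 h2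
      _ ≤ m ^ (-σ₂) * ((n : ℝ) + m) ^ (-σ₁) := by
        apply mul_le_mul_of_nonneg_left
          (rpow_neg_mono hnm0 (by linarith) hσ0.le)
          (Real.rpow_nonneg hm0.le _)
  have hinvle : ((n : ℝ) + u)⁻¹ ≤ ((n : ℝ) + m)⁻¹ :=
    inv_anti₀ hnm0 (by linarith)
  rw [norm_mul, norm_mul, hinv, hexp]
  have goal_eq : ((k : ℝ) + S) * m ^ (-σ₂) *
      ((1 + |Real.log m| + Real.log ((n : ℝ) + 2)) ^ k * ((n : ℝ) + m) ^ (-(σ₁ + 1)))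
      = ((n : ℝ) + m)⁻¹ * (((k : ℝ) + S) * Λ ^ k) * (m ^ (-σ₂) * ((n : ℝ) + m) ^ (-σ₁)) := by
    rw [show -(σ₁ + 1) = -σ₁ + (-1) by ring, Real.rpow_add hnm0, Real.rpow_neg_one, hΛ]
    ring
  rw [goal_eq]
  apply mul_le_mul
  · apply mul_le_mul hinvle hmid (norm_nonneg _) (by positivity)
  · exact hre
  · positivity
  · positivity
lemma summable_master (k : ℕ) {C c p : ℝ} (hC : 0 ≤ C) (hc : 0 < c) (hp : 1 < p) :
    Summable (fun n : ℕ => (C + Real.log ((n : ℝ) + 2)) ^ k * ((n : ℝ) + c) ^ (-p)) := by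
  set ε : ℝ := (p - 1) / (2 * (k + 1)) with hε
  have hε0 : 0 < ε := by
    apply div_pos (by linarith) (by positivity)
  have hεk : ε * k ≤ (p - 1) / 2 := by
    rw [hε, div_mul_eq_mul_div, div_le_div_iff₀ (by positivity) (by norm_num)]
    have : (k : ℝ) ≤ k + 1 := by linarith
    nlinarith [sub_pos.mpr hp]
  set q : ℝ := p - ε * k with hq
  have hq1 : 1 < q := by rw [hq]; linarith
  -- the comparison series
  have hsum : Summable (fun n : ℕ => ((n : ℝ) + 1) ^ (-q)) := by
    have h0 : Summable (fun n : ℕ => ((n : ℝ)) ^ (-q)) :=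
      Real.summable_nat_rpow.mpr (by linarith)
    have := (summable_nat_add_iff 1).mpr h0
    apply this.congr
    intro n; push_cast; ring_nf
  set K : ℝ := (C + 1 / ε) ^ k * 2 ^ (ε * k) * (min 1 c) ^ (-p) with hK
  apply Summable.of_nonneg_of_le ?_ ?_ (hsum.mul_left K)
  · intro n
    have hn2 : (0:ℝ) < (n : ℝ) + 2 := by positivity
    have : (0:ℝ) ≤ C + Real.log ((n : ℝ) + 2) := by
      have : (0:ℝ) ≤ Real.log ((n:ℝ)+2) := Real.log_nonneg (by push_cast; linarith [Nat.cast_nonneg (α := ℝ) n])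
      linarith
    positivity
  · intro n
    have hn1 : (0:ℝ) < (n : ℝ) + 1 := by positivity
    have hn2 : (0:ℝ) < (n : ℝ) + 2 := by positivity
    have hlogle : C + Real.log ((n : ℝ) + 2) ≤ (C + 1 / ε) * ((n : ℝ) + 2) ^ ε := by
      have h1 : Real.log ((n : ℝ) + 2) ≤ ((n : ℝ) + 2) ^ ε / ε :=
        Real.log_le_rpow_div hn2.le hε0
      have h2 : (1:ℝ) ≤ ((n : ℝ) + 2) ^ ε :=
        Real.one_le_rpow (by linarith) hε0.le
      have h3 : C * 1 ≤ C * ((n : ℝ) + 2) ^ ε := by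
        apply mul_le_mul_of_nonneg_left h2 hC
      have h4 : ((n : ℝ) + 2) ^ ε / ε = (1 / ε) * ((n : ℝ) + 2) ^ ε := by ring
      nlinarith
    have hCnn : (0:ℝ) ≤ C + Real.log ((n : ℝ) + 2) := by
      have : (0:ℝ) ≤ Real.log ((n:ℝ)+2) := Real.log_nonneg (by linarith)
      linarith
    have hpow : (C + Real.log ((n : ℝ) + 2)) ^ k
        ≤ (C + 1 / ε) ^ k * (((n : ℝ) + 2) ^ ε) ^ k := by
      rw [← mul_pow]
      exact pow_le_pow_left₀ hCnn hlogle k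
    have h2a : ((n : ℝ) + 2) ^ ε ≤ 2 ^ ε * ((n : ℝ) + 1) ^ ε := by
      rw [← Real.mul_rpow (by norm_num) hn1.le]
      exact Real.rpow_le_rpow hn2.le (by linarith) hε0.le
    have h2b : (((n : ℝ) + 2) ^ ε) ^ k ≤ (2 ^ ε * ((n : ℝ) + 1) ^ ε) ^ k :=
      pow_le_pow_left₀ (Real.rpow_nonneg hn2.le _) h2a k
    have h2c : (2 ^ ε * ((n : ℝ) + 1) ^ ε) ^ k = 2 ^ (ε * k) * ((n : ℝ) + 1) ^ (ε * k) := by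
      rw [mul_pow, ← Real.rpow_natCast (2 ^ ε) k, ← Real.rpow_natCast (((n:ℝ)+1) ^ ε) k,
        ← Real.rpow_mul (by norm_num), ← Real.rpow_mul hn1.le]
    have hbase : min 1 c * ((n : ℝ) + 1) ≤ (n : ℝ) + c := by
      rcases le_total 1 c with h | h
      · rw [min_eq_left h]; linarith
      · rw [min_eq_right h]; nlinarith [Nat.cast_nonneg (α := ℝ) n]
    have hminpos : (0:ℝ) < min 1 c := lt_min one_pos hc
    have hrpow : ((n : ℝ) + c) ^ (-p) ≤ (min 1 c) ^ (-p) * ((n : ℝ) + 1) ^ (-p) := by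
      have h1 : ((n : ℝ) + c) ^ (-p) ≤ (min 1 c * ((n : ℝ) + 1)) ^ (-p) := by
        apply rpow_neg_mono (by positivity) hbase (by linarith)
      rwa [Real.mul_rpow hminpos.le hn1.le] at h1
    calc (C + Real.log ((n : ℝ) + 2)) ^ k * ((n : ℝ) + c) ^ (-p)
        ≤ ((C + 1 / ε) ^ k * (2 ^ (ε * k) * ((n : ℝ) + 1) ^ (ε * k)))
          * ((min 1 c) ^ (-p) * ((n : ℝ) + 1) ^ (-p)) := by
          apply mul_le_mul
          · calc (C + Real.log ((n : ℝ) + 2)) ^ k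
                ≤ (C + 1 / ε) ^ k * (((n : ℝ) + 2) ^ ε) ^ k := hpow
              _ ≤ (C + 1 / ε) ^ k * (2 ^ (ε * k) * ((n : ℝ) + 1) ^ (ε * k)) := by
                  apply mul_le_mul_of_nonneg_left (h2c ▸ h2b)
                  positivity
          · exact hrpow
          · positivity
          · positivity
      _ = K * (((n : ℝ) + 1) ^ (ε * k) * ((n : ℝ) + 1) ^ (-p)) := by rw [hK]; ring
      _ = K * ((n : ℝ) + 1) ^ (-q) := by
          rw [← Real.rpow_add hn1, hq]; ring_nf

lemma norm_DD' (n k : ℕ) (x : ℝ) (hx : 0 < (n : ℝ) + x) (s : ℂ) :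
    ‖DD x n k s‖
      = |Real.log ((n : ℝ) + x)| ^ k * ((n : ℝ) + x) ^ (-s.re) := by
  unfold DD
  rw [norm_mul, norm_pow, norm_neg, Complex.norm_real, Real.norm_eq_abs,
    Complex.norm_exp]
  congr 1
  have : (s * -((Real.log ((n : ℝ) + x) : ℝ) : ℂ)).re
      = Real.log ((n : ℝ) + x) * (-s.re) := by
    simp [Complex.mul_re]
    ring
  rw [this, Real.rpow_def_of_pos hx]

lemma hasDerivAt_DD_s (x : ℝ) (n k : ℕ) (s : ℂ) :
    HasDerivAt (fun s => DD x n k s) (DD x n (k + 1) s) s := by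
  have h1 : HasDerivAt (fun s : ℂ => s * -((Real.log ((n : ℝ) + x) : ℝ) : ℂ))
      (-((Real.log ((n : ℝ) + x) : ℝ) : ℂ)) s := hasDerivAt_mul_const _
  have h2 := h1.cexp
  have h3 := h2.const_mul ((-((Real.log ((n : ℝ) + x) : ℝ) : ℂ)) ^ k)
  refine h3.congr_deriv ?_
  simp only [DD]
  ring

lemma pow_hasDerivAt {f : ℝ → ℂ} {f' : ℂ} {x : ℝ} (hf : HasDerivAt f f' x) (k : ℕ) :
    HasDerivAt (fun u => f u ^ k) ((k : ℂ) * f x ^ (k - 1) * f') x := by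
  induction k with
  | zero => simpa using hasDerivAt_const x (1 : ℂ)
  | succ j ih =>
    have h : HasDerivAt (fun u => f u ^ j * f u) _ x := ih.mul hf
    have : (fun u => f u ^ j * f u) = fun u => f u ^ (j + 1) := by
      funext u; rw [← pow_succ]
    rw [this] at h
    convert h using 1
    cases j with
    | zero => simp
    | succ i =>
      simp only [Nat.add_sub_cancel]
      push_cast
      ring

lemma hasDerivAt_DD_x (n k : ℕ) (s : ℂ) {x : ℝ} (hx : 0 < (n : ℝ) + x) :
    HasDerivAt (fun u => DD u n k s)
      (-(((((n : ℝ) + x)⁻¹ : ℝ)) : ℂ) *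
        ((k : ℂ) * (-((Real.log ((n : ℝ) + x) : ℝ) : ℂ)) ^ (k - 1)
          + s * (-((Real.log ((n : ℝ) + x) : ℝ) : ℂ)) ^ k) *
        Complex.exp (s * -((Real.log ((n : ℝ) + x) : ℝ) : ℂ))) x := by
  have hadd : HasDerivAt (fun u : ℝ => (n : ℝ) + u) 1 x := (hasDerivAt_id x).const_add _
  have hlog : HasDerivAt (fun u : ℝ => Real.log ((n : ℝ) + u)) (((n : ℝ) + x)⁻¹ * 1) x :=
    (Real.hasDerivAt_log hx.ne').comp x hadd
  have hl : HasDerivAt (fun u : ℝ => ((Real.log ((n : ℝ) + u) : ℝ) : ℂ))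
      ((((n : ℝ) + x)⁻¹ * 1 : ℝ) : ℂ) x := hlog.ofReal_comp
  have hneg : HasDerivAt (fun u : ℝ => -((Real.log ((n : ℝ) + u) : ℝ) : ℂ))
      (-((((n : ℝ) + x)⁻¹ * 1 : ℝ) : ℂ)) x := hl.neg
  have hpow := pow_hasDerivAt hneg k
  have hexp := (hneg.const_mul s).cexp
  have h := hpow.mul hexp
  refine h.congr_deriv ?_
  push_cast
  ring

/-- Mean value theorem bound for differences `DD x n k s - DD y n k s`. -/
lemma diff_bound {m Mb : ℝ} (hm0 : 0 < m) (hM1 : Mb ≤ 1) (hmM : m ≤ Mb)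
    {x y : ℝ} (hx : x ∈ Icc m Mb) (hy : y ∈ Icc m Mb)
    {σ₁ σ₂ S : ℝ} (hσ0 : 0 < σ₁) {s : ℂ} (h1 : σ₁ ≤ s.re) (h2 : s.re ≤ σ₂) (hS : ‖s‖ ≤ S)
    (k n : ℕ) :
    ‖DD x n k s - DD y n k s‖
      ≤ (Mb - m) * (((k : ℝ) + S) * m ^ (-σ₂) *
        ((1 + |Real.log m| + Real.log ((n : ℝ) + 2)) ^ k * ((n : ℝ) + m) ^ (-(σ₁ + 1)))) := by
  have hm1 : m ≤ 1 := hmM.trans hM1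
  set C : ℝ := ((k : ℝ) + S) * m ^ (-σ₂) *
      ((1 + |Real.log m| + Real.log ((n : ℝ) + 2)) ^ k * ((n : ℝ) + m) ^ (-(σ₁ + 1))) with hC
  have hmvt := Convex.norm_image_sub_le_of_norm_hasDerivWithin_le
    (f := fun u => DD u n k s)
    (f' := fun u => -(((((n : ℝ) + u)⁻¹ : ℝ)) : ℂ) *
        ((k : ℂ) * (-((Real.log ((n : ℝ) + u) : ℝ) : ℂ)) ^ (k - 1)
          + s * (-((Real.log ((n : ℝ) + u) : ℝ) : ℂ)) ^ k) *
        Complex.exp (s * -((Real.log ((n : ℝ) + u) : ℝ) : ℂ)))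
    (C := C) (s := Icc m Mb)
    (fun u hu => (hasDerivAt_DD_x n k s
      (by have := hu.1; have : (0:ℝ) ≤ (n:ℝ) := Nat.cast_nonneg n; linarith)).hasDerivWithinAt)
    (fun u hu => key_bound hm0 hm1 hu.1 (hu.2.trans hM1) hσ0 h1 h2 hS k n)
    (convex_Icc m Mb) hy hx
  calc ‖DD x n k s - DD y n k s‖ ≤ C * ‖x - y‖ := hmvt
    _ ≤ C * (Mb - m) := by
      have hS0 : (0:ℝ) ≤ S := (norm_nonneg s).trans hS
      have h3 : (0:ℝ) ≤ Real.log ((n : ℝ) + 2) :=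
        Real.log_nonneg (by linarith [Nat.cast_nonneg (α := ℝ) n])
      have hCnn : 0 ≤ C := by
        rw [hC]
        apply mul_nonneg (mul_nonneg (by positivity) (Real.rpow_nonneg hm0.le _))
        apply mul_nonneg (pow_nonneg (by linarith [abs_nonneg (Real.log m)]) _)
          (Real.rpow_nonneg (by linarith [Nat.cast_nonneg (α := ℝ) n]) _)
      apply mul_le_mul_of_nonneg_left _ hCnn
      rw [Real.norm_eq_abs, abs_le]
      constructor <;> [linarith [hx.1, hy.2]; linarith [hx.2, hy.1]]
    _ = (Mb - m) * C := mul_comm _ _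

/-- Generic lemma: iterated derivatives of a series on a ball. -/
lemma iteratedDeriv_tsum_aux {D : ℕ → ℕ → ℂ → ℂ} {u : ℕ → ℕ → ℝ} {c : ℂ} {R : ℝ}
    (hR : 0 < R)
    (hd : ∀ n k s, s ∈ Metric.ball c R → HasDerivAt (D n k) (D n (k + 1) s) s)
    (hu : ∀ k, Summable (u k))
    (hb : ∀ n k s, s ∈ Metric.ball c R → ‖D n (k + 1) s‖ ≤ u k n)
    (h0 : Summable (fun n => D n 0 c)) :
    ∀ k, (∀ s ∈ Metric.ball c R, iteratedDeriv k (fun w => ∑' n, D n 0 w) s = ∑' n, D n k s)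
      ∧ Summable (fun n => D n k c) := by
  intro k
  induction k with
  | zero => exact ⟨fun s _ => by simp [iteratedDeriv_zero], h0⟩
  | succ k ih =>
    have hder : ∀ s ∈ Metric.ball c R,
        HasDerivAt (fun w => ∑' n, D n k w) (∑' n, D n (k + 1) s) s := by
      intro s hs
      exact hasDerivAt_tsum_of_isPreconnected (hu k) isOpen_ball
        (convex_ball c R).isPreconnected
        (fun n y hy => hd n k y hy) (fun n y hy => hb n k y hy)
        (mem_ball_self hR) ih.2 hs
    constructor
    · intro s hs
      rw [iteratedDeriv_succ]
      have heq : iteratedDeriv k (fun w => ∑' n, D n 0 w) =ᶠ[𝓝 s]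
          (fun w => ∑' n, D n k w) :=
        Filter.eventuallyEq_of_mem (isOpen_ball.mem_nhds hs) (fun y hy => ih.1 y hy)
      rw [heq.deriv_eq]
      exact (hder s hs).deriv
    · exact Summable.of_norm_bounded (hu k)
        (fun n => hb n k c (mem_ball_self hR))
lemma one_div_cpow_eq {b : ℝ} (hb : 0 < b) (w : ℂ) :
    1 / ((b : ℂ)) ^ w = Complex.exp (w * -((Real.log b : ℝ) : ℂ)) := by
  have hb0 : (b : ℂ) ≠ 0 := by exact_mod_cast hb.ne'
  rw [Complex.cpow_def_of_ne_zero hb0, one_div, ← Complex.exp_neg,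
    ← Complex.ofReal_log hb.le]
  congr 1
  ring

lemma exp_neg_log {b : ℝ} (hb : 0 < b) :
    Complex.exp (-((Real.log b : ℝ) : ℂ)) = ((b : ℝ) : ℂ)⁻¹ := by
  rw [Complex.exp_neg, ← Complex.ofReal_exp, Real.exp_log hb]

lemma entire_deriv {f : ℂ → ℂ} (hf : Differentiable ℂ f) : Differentiable ℂ (deriv f) := by
  have h := ((hf.differentiableOn).analyticOnNhd isOpen_univ).deriv
  rw [← differentiableOn_univ]
  exact h.differentiableOn

lemma entire_iteratedDeriv {f : ℂ → ℂ} (hf : Differentiable ℂ f) (k : ℕ) :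
    Differentiable ℂ (iteratedDeriv k f) := by
  induction k generalizing f with
  | zero => simpa [iteratedDeriv_zero]
  | succ k ih =>
    rw [iteratedDeriv_succ']
    exact ih (entire_deriv hf)

lemma entire_iteratedDeriv_sub {f g : ℂ → ℂ} (hf : Differentiable ℂ f)
    (hg : Differentiable ℂ g) (k : ℕ) (z : ℂ) :
    iteratedDeriv k (fun w => f w - g w) z
      = iteratedDeriv k f z - iteratedDeriv k g z := by
  induction k generalizing z with
  | zero => simp [iteratedDeriv_zero]
  | succ k ih =>
    rw [iteratedDeriv_succ, iteratedDeriv_succ, iteratedDeriv_succ]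
    have h : iteratedDeriv k (fun w => f w - g w)
        = fun z => iteratedDeriv k f z - iteratedDeriv k g z := funext ih
    rw [h]
    exact deriv_sub ((entire_iteratedDeriv hf k).differentiableAt)
      ((entire_iteratedDeriv hg k).differentiableAt)

lemma ball_re {c : ℂ} {R : ℝ} {s : ℂ} (hs : s ∈ Metric.ball c R) :
    c.re - R < s.re ∧ s.re < c.re + R ∧ ‖s‖ < ‖c‖ + R := by
  have h1 : ‖s - c‖ < R := by rwa [mem_ball, dist_eq_norm] at hs
  have h2 : |(s - c).re| ≤ ‖s - c‖ := by
    exact Complex.abs_re_le_norm _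
  rw [Complex.sub_re] at h2
  have h3 := abs_le.mp h2
  refine ⟨by linarith [h3.1], by linarith [h3.2], ?_⟩
  calc ‖s‖ = ‖c + (s - c)‖ := by ring_nf
    _ ≤ ‖c‖ + ‖s - c‖ := norm_add_le _ _
    _ < ‖c‖ + R := by linarith

lemma appA (α : ℝ) (hα0 : 0 < α) (hα1 : α < 1) (k : ℕ) :
    (iteratedDeriv k (fun w => HurwitzZeta.hurwitzZeta (α : UnitAddCircle) w) 2
        = ∑' n : ℕ, DD α n k 2) ∧ Summable (fun n : ℕ => DD α n k 2) := by
  have hαpos : ∀ n : ℕ, (0:ℝ) < (n : ℝ) + α := fun n => by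
    have : (0:ℝ) ≤ (n : ℝ) := Nat.cast_nonneg n; linarith
  have hbound : ∀ (n j : ℕ) (s : ℂ), s ∈ Metric.ball (2:ℂ) (1/4) →
      ‖DD α n j s‖ ≤ α ^ (-(9/4:ℝ)) *
        ((|Real.log α| + Real.log ((n:ℝ)+2)) ^ j * ((n:ℝ)+α) ^ (-(7/4:ℝ))) := by
    intro n j s hs
    obtain ⟨hr1, hr2, -⟩ := ball_re hs
    have hre2 : (2:ℂ).re = 2 := by simp
    rw [hre2] at hr1 hr2
    rw [norm_DD' n j α (hαpos n) s]
    have e1 : |Real.log ((n:ℝ)+α)| ^ j ≤ (|Real.log α| + Real.log ((n:ℝ)+2)) ^ j :=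
      pow_le_pow_left₀ (abs_nonneg _)
        (log_abs_bound hα0 (by linarith [hαpos n, Nat.cast_nonneg (α := ℝ) n] : α ≤ (n:ℝ)+α)
          (by linarith [Nat.cast_nonneg (α := ℝ) n])) j
    have e2 : ((n:ℝ)+α) ^ (-s.re) ≤ α ^ (-(9/4:ℝ)) * ((n:ℝ)+α) ^ (-(7/4:ℝ)) :=
      rpow_base_bound hα0 hα1.le (by linarith [Nat.cast_nonneg (α := ℝ) n])
        (by norm_num) (by linarith) (by linarith)
    calc |Real.log ((n:ℝ)+α)| ^ j * ((n:ℝ)+α) ^ (-s.re)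
        ≤ (|Real.log α| + Real.log ((n:ℝ)+2)) ^ j * (α ^ (-(9/4:ℝ)) * ((n:ℝ)+α) ^ (-(7/4:ℝ))) := by
          have hlog2 : (0:ℝ) ≤ Real.log ((n:ℝ)+2) :=
            Real.log_nonneg (by linarith [Nat.cast_nonneg (α := ℝ) n])
          apply mul_le_mul e1 e2 (Real.rpow_nonneg (hαpos n).le _)
            (pow_nonneg (by linarith [abs_nonneg (Real.log α)]) _)
      _ = α ^ (-(9/4:ℝ)) * ((|Real.log α| + Real.log ((n:ℝ)+2)) ^ j * ((n:ℝ)+α) ^ (-(7/4:ℝ))) := by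
          ring
  have hu : ∀ j : ℕ, Summable (fun n : ℕ => α ^ (-(9/4:ℝ)) *
      ((|Real.log α| + Real.log ((n:ℝ)+2)) ^ j * ((n:ℝ)+α) ^ (-(7/4:ℝ)))) := fun j =>
    (summable_master j (abs_nonneg _) hα0 (by norm_num)).mul_left _
  have h0 : Summable (fun n : ℕ => DD α n 0 2) := by
    apply Summable.of_norm_bounded (hu 0)
    intro n
    exact hbound n 0 2 (mem_ball_self (by norm_num))
  have hgen := iteratedDeriv_tsum_aux
    (u := fun j n => α ^ (-(9/4:ℝ)) *
      ((|Real.log α| + Real.log ((n:ℝ)+2)) ^ (j+1) * ((n:ℝ)+α) ^ (-(7/4:ℝ))))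
    (by norm_num : (0:ℝ) < 1/4)
    (fun n k s _ => hasDerivAt_DD_s α n k s) (fun j => hu (j+1))
    (fun n k s hs => hbound n (k+1) s hs) h0
  -- identification with hurwitzZeta on the half plane
  have hopen : IsOpen {w : ℂ | 1 < w.re} := isOpen_lt continuous_const Complex.continuous_re
  have hEq : Set.EqOn (fun w => HurwitzZeta.hurwitzZeta (α : UnitAddCircle) w)
      (fun w => ∑' n : ℕ, DD α n 0 w) {w : ℂ | 1 < w.re} := by
    intro w hw
    show HurwitzZeta.hurwitzZeta (α : UnitAddCircle) w = ∑' n : ℕ, DD α n 0 w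
    have hsum := HurwitzZeta.hasSum_hurwitzZeta_of_one_lt_re ⟨hα0.le, hα1.le⟩ hw
    have : HurwitzZeta.hurwitzZeta (α : UnitAddCircle) w = ∑' n : ℕ, 1 / ((n : ℂ) + α) ^ w :=
      hsum.tsum_eq.symm
    rw [this]
    apply tsum_congr
    intro n
    have hcast : ((n : ℂ) + α) = ((((n:ℝ) + α : ℝ)) : ℂ) := by push_cast; ring
    rw [hcast, one_div_cpow_eq (hαpos n) w]
    simp [DD]
  have h2mem : (2:ℂ) ∈ {w : ℂ | 1 < w.re} := by simp
  have hev : (fun w => HurwitzZeta.hurwitzZeta (α : UnitAddCircle) w)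
      =ᶠ[𝓝 (2:ℂ)] (fun w => ∑' n : ℕ, DD α n 0 w) :=
    Filter.eventuallyEq_of_mem (hopen.mem_nhds h2mem) hEq
  refine ⟨?_, (hgen k).2⟩
  rw [hev.iteratedDeriv_eq k]
  exact (hgen k).1 2 (mem_ball_self (by norm_num))

lemma hC1nn (m : ℝ) : (0:ℝ) ≤ 1 + |Real.log m| := by linarith [abs_nonneg (Real.log m)]

lemma summable_diff_bd {m Mb : ℝ} (hm0 : 0 < m) (j : ℕ) {σ₁ σ₂ S : ℝ} (hσ0 : 0 < σ₁) :
    Summable (fun n : ℕ => (Mb - m) * (((j : ℝ) + S) * m ^ (-σ₂) *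
      ((1 + |Real.log m| + Real.log ((n : ℝ) + 2)) ^ j * ((n : ℝ) + m) ^ (-(σ₁ + 1))))) := by
  have h := summable_master j (hC1nn m) hm0 (by linarith : (1:ℝ) < σ₁ + 1)
  have h2 : Summable (fun n : ℕ =>
      (1 + |Real.log m| + Real.log ((n : ℝ) + 2)) ^ j * ((n : ℝ) + m) ^ (-(σ₁ + 1))) := by
    apply h.congr
    intro n
    rw [add_assoc]  -- maybe not needed
  exact ((h2.mul_left _).mul_left _)

lemma appB {m Mb x y : ℝ} (hm0 : 0 < m) (hmM : m ≤ Mb) (hM1 : Mb ≤ 1)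
    (hx : x ∈ Icc m Mb) (hy : y ∈ Icc m Mb) (r : ℕ) :
    iteratedDeriv r (fun w => ∑' n : ℕ, (DD x n 0 w - DD y n 0 w)) 1
      = ∑' n : ℕ, (DD x n r 1 - DD y n r 1) := by
  have hball : ∀ s ∈ Metric.ball (1:ℂ) (1/8),
      (7/8:ℝ) ≤ s.re ∧ s.re ≤ 9/8 ∧ ‖s‖ ≤ 2 := by
    intro s hs
    obtain ⟨h1, h2, h3⟩ := ball_re hs
    simp only [Complex.one_re, norm_one] at h1 h2 h3
    exact ⟨by linarith, by linarith, by linarith⟩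
  have hgen := iteratedDeriv_tsum_aux
    (D := fun n k s => DD x n k s - DD y n k s)
    (u := fun k n => (Mb - m) * ((((k:ℝ) + 1) + 2) * m ^ (-(9/8:ℝ)) *
      ((1 + |Real.log m| + Real.log ((n : ℝ) + 2)) ^ (k+1) * ((n : ℝ) + m) ^ (-((7/8:ℝ) + 1)))))
    (by norm_num : (0:ℝ) < 1/8)
    (fun n k s _ => (hasDerivAt_DD_s x n k s).sub (hasDerivAt_DD_s y n k s))
    (fun k => by
      have := summable_diff_bd (Mb := Mb) hm0 (k+1) (S := 2) (σ₂ := 9/8)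
        (by norm_num : (0:ℝ) < 7/8)
      apply this.congr
      intro n
      push_cast
      ring)
    (fun n k s hs => by
      obtain ⟨h1, h2, h3⟩ := hball s hs
      have := diff_bound hm0 hM1 hmM hx hy (by norm_num : (0:ℝ) < 7/8) h1 h2 h3 (k+1) n
      apply le_trans this (le_of_eq ?_)
      push_cast
      ring)
    (by
      apply Summable.of_norm_bounded (summable_diff_bd (Mb := Mb) hm0 0 (S := 2) (σ₂ := 9/8)
        (by norm_num : (0:ℝ) < 7/8))
      intro n
      exact diff_bound hm0 hM1 hmM hx hy (by norm_num) (by norm_num [Complex.one_re])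
        (by norm_num [Complex.one_re]) (by norm_num) 0 n)
  exact (hgen r).1 1 (mem_ball_self (by norm_num))

lemma T_diffOn {m Mb x y : ℝ} (hm0 : 0 < m) (hmM : m ≤ Mb) (hM1 : Mb ≤ 1)
    (hx : x ∈ Icc m Mb) (hy : y ∈ Icc m Mb) :
    DifferentiableOn ℂ (fun w => ∑' n : ℕ, (DD x n 0 w - DD y n 0 w))
      {w : ℂ | (3/4:ℝ) < w.re} := by
  intro s₀ hs₀
  apply DifferentiableAt.differentiableWithinAt
  have hs₀re : (3/4:ℝ) < s₀.re := hs₀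
  have hσ0 : (0:ℝ) < s₀.re - 1/8 := by linarith
  have hu : Summable (fun n : ℕ => (Mb - m) * (((1:ℝ) + (‖s₀‖ + 1/8)) * m ^ (-(s₀.re + 1/8)) *
      ((1 + |Real.log m| + Real.log ((n : ℝ) + 2)) ^ 1
        * ((n : ℝ) + m) ^ (-((s₀.re - 1/8) + 1))))) := by
    have := summable_diff_bd (Mb := Mb) hm0 1 (S := ‖s₀‖ + 1/8)
      (σ₂ := s₀.re + 1/8) hσ0
    apply this.congr
    intro n
    push_cast
    ring
  have hg : ∀ (n : ℕ), ∀ w ∈ Metric.ball s₀ (1/8),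
      HasDerivAt (fun w => DD x n 0 w - DD y n 0 w) (DD x n 1 w - DD y n 1 w) w :=
    fun n w _ => (hasDerivAt_DD_s x n 0 w).sub (hasDerivAt_DD_s y n 0 w)
  have hg' : ∀ (n : ℕ), ∀ w ∈ Metric.ball s₀ (1/8),
      ‖DD x n 1 w - DD y n 1 w‖ ≤ (Mb - m) * (((1:ℝ) + (‖s₀‖ + 1/8)) * m ^ (-(s₀.re + 1/8)) *
        ((1 + |Real.log m| + Real.log ((n : ℝ) + 2)) ^ 1
          * ((n : ℝ) + m) ^ (-((s₀.re - 1/8) + 1)))) := by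
    intro n w hw
    obtain ⟨h1, h2, h3⟩ := ball_re hw
    have := diff_bound hm0 hM1 hmM hx hy hσ0 h1.le h2.le h3.le 1 n
    apply le_trans this (le_of_eq ?_)
    push_cast
    ring
  have hg0 : Summable (fun n : ℕ => DD x n 0 s₀ - DD y n 0 s₀) := by
    apply Summable.of_norm_bounded (summable_diff_bd (Mb := Mb) hm0 0
      (S := ‖s₀‖ + 1/8) (σ₂ := s₀.re + 1/8) hσ0)
    intro n
    exact diff_bound hm0 hM1 hmM hx hy hσ0 (by linarith) (by linarith)
      (by linarith [norm_nonneg s₀]) 0 n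
  have hkey : HasDerivAt (fun w => ∑' n : ℕ, (DD x n 0 w - DD y n 0 w))
      (∑' n : ℕ, (DD x n 1 s₀ - DD y n 1 s₀)) s₀ :=
    hasDerivAt_tsum_of_isPreconnected hu isOpen_ball
      (convex_ball s₀ (1/8)).isPreconnected hg hg'
      (mem_ball_self (by norm_num)) hg0 (mem_ball_self (by norm_num))
  exact hkey.differentiableAt

end Stmt14Aux

open Stmt14Aux Complex Filter Set Metric Topology

theorem stmt_14 (r : ℕ) (hr : 1 ≤ r) (α : ℝ) (hα0 : 0 < α) (hα1 : α < 1)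
    (G : ℝ → ℂ → ℂ)
    (hG : ∀ x : ℝ, 0 < x → x < 1 → Differentiable ℂ (G x))
    (hG1 : ∀ x : ℝ, 0 < x → x < 1 → ∀ w : ℂ, w ≠ 1 →
      G x w = HurwitzZeta.hurwitzZeta (x : UnitAddCircle) w - 1 / (w - 1)) :
    HasDerivAt (fun x : ℝ => iteratedDeriv r (G x) 1 / (r.factorial : ℂ))
      (-(iteratedDeriv (r - 1)
            (fun w => HurwitzZeta.hurwitzZeta (α : UnitAddCircle) w) 2) /
          ((r - 1).factorial : ℂ)
        - (iteratedDeriv r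
            (fun w => HurwitzZeta.hurwitzZeta (α : UnitAddCircle) w) 2) /
          (r.factorial : ℂ)) α := by
  set m : ℝ := α / 2 with hm
  set Mb : ℝ := (1 + α) / 2 with hMb
  have hm0 : 0 < m := by rw [hm]; linarith
  have hmM : m ≤ Mb := by rw [hm, hMb]; linarith
  have hM1 : Mb ≤ 1 := by rw [hMb]; linarith
  have hαJ : α ∈ Ioo m Mb := ⟨by rw [hm]; linarith, by rw [hMb]; linarith⟩
  have hαIcc : α ∈ Icc m Mb := Ioo_subset_Icc_self hαJ
  have hGα := hG α hα0 hα1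
  -- Step 1 : representation of the function on the interval
  have E1 : ∀ x ∈ Ioo m Mb, iteratedDeriv r (G x) 1
      = iteratedDeriv r (G α) 1 + ∑' n : ℕ, (DD x n r 1 - DD α n r 1) := by
    intro x hx
    have hx0 : 0 < x := lt_trans hm0 hx.1
    have hx1 : x < 1 := lt_of_lt_of_le hx.2 hM1
    have hxIcc : x ∈ Icc m Mb := Ioo_subset_Icc_self hx
    have hGx := hG x hx0 hx1
    have hA : Differentiable ℂ (fun w => G x w - G α w) := hGx.sub hGα
    have hUopen : IsOpen {w : ℂ | (3/4:ℝ) < w.re} :=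
      isOpen_lt continuous_const Complex.continuous_re
    have hAa : AnalyticOnNhd ℂ (fun w => G x w - G α w) {w : ℂ | (3/4:ℝ) < w.re} :=
      (hA.differentiableOn).analyticOnNhd hUopen
    have hTa : AnalyticOnNhd ℂ (fun w => ∑' n : ℕ, (DD x n 0 w - DD α n 0 w))
        {w : ℂ | (3/4:ℝ) < w.re} :=
      (T_diffOn hm0 hmM hM1 hxIcc hαIcc).analyticOnNhd hUopen
    have hVopen : IsOpen {w : ℂ | 1 < w.re} :=
      isOpen_lt continuous_const Complex.continuous_re
    have hEqV : EqOn (fun w => G x w - G α w)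
        (fun w => ∑' n : ℕ, (DD x n 0 w - DD α n 0 w)) {w : ℂ | 1 < w.re} := by
      intro w hw
      have hw' : 1 < w.re := hw
      have hw1 : w ≠ 1 := by
        intro h; rw [h] at hw'; simp at hw'
      show G x w - G α w = ∑' n : ℕ, (DD x n 0 w - DD α n 0 w)
      rw [hG1 x hx0 hx1 w hw1, hG1 α hα0 hα1 w hw1]
      have hsx := HurwitzZeta.hasSum_hurwitzZeta_of_one_lt_re ⟨hx0.le, hx1.le⟩ hw'
      have hsα := HurwitzZeta.hasSum_hurwitzZeta_of_one_lt_re ⟨hα0.le, hα1.le⟩ hw'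
      have hsub := (hsx.sub hsα).tsum_eq
      have e : HurwitzZeta.hurwitzZeta (x : UnitAddCircle) w - 1 / (w - 1)
          - (HurwitzZeta.hurwitzZeta (α : UnitAddCircle) w - 1 / (w - 1))
          = HurwitzZeta.hurwitzZeta (x : UnitAddCircle) w
            - HurwitzZeta.hurwitzZeta (α : UnitAddCircle) w := by ring
      rw [e, ← hsub]
      apply tsum_congr
      intro n
      have hpx : (0:ℝ) < (n : ℝ) + x := by
        have : (0:ℝ) ≤ (n:ℝ) := Nat.cast_nonneg n; linarith
      have hpα : (0:ℝ) < (n : ℝ) + α := by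
        have : (0:ℝ) ≤ (n:ℝ) := Nat.cast_nonneg n; linarith
      have cx : ((n : ℂ) + (x:ℂ)) = ((((n:ℝ) + x : ℝ)) : ℂ) := by push_cast; ring
      have cα : ((n : ℂ) + (α:ℂ)) = ((((n:ℝ) + α : ℝ)) : ℂ) := by push_cast; ring
      rw [cx, cα, one_div_cpow_eq hpx w, one_div_cpow_eq hpα w]
      simp [DD]
    have h2mem : (2:ℂ) ∈ {w : ℂ | (3/4:ℝ) < w.re} := by simp; norm_num
    have hEqU : EqOn (fun w => G x w - G α w)
        (fun w => ∑' n : ℕ, (DD x n 0 w - DD α n 0 w)) {w : ℂ | (3/4:ℝ) < w.re} :=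
      hAa.eqOn_of_preconnected_of_eventuallyEq hTa
        (convex_halfSpace_re_gt _).isPreconnected h2mem
        (Filter.eventuallyEq_of_mem (hVopen.mem_nhds (by simp)) hEqV)
    have h1mem : (1:ℂ) ∈ {w : ℂ | (3/4:ℝ) < w.re} := by simp; norm_num
    have hev1 : (fun w => G x w - G α w)
        =ᶠ[𝓝 (1:ℂ)] (fun w => ∑' n : ℕ, (DD x n 0 w - DD α n 0 w)) :=
      Filter.eventuallyEq_of_mem (hUopen.mem_nhds h1mem) hEqU
    have e1 := hev1.iteratedDeriv_eq r
    rw [entire_iteratedDeriv_sub hGx hGα r 1, appB hm0 hmM hM1 hxIcc hαIcc r] at e1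
    exact sub_eq_iff_eq_add'.mp e1
  -- Step 2 : differentiate the series in x
  have hder : HasDerivAt (fun u : ℝ => ∑' n : ℕ, (DD u n r 1 - DD α n r 1))
      (∑' n : ℕ, (-(((((n : ℝ) + α)⁻¹ : ℝ)) : ℂ) *
        ((r : ℂ) * (-((Real.log ((n : ℝ) + α) : ℝ) : ℂ)) ^ (r - 1)
          + 1 * (-((Real.log ((n : ℝ) + α) : ℝ) : ℂ)) ^ r) *
        Complex.exp (1 * -((Real.log ((n : ℝ) + α) : ℝ) : ℂ)))) α := by
    apply hasDerivAt_tsum_of_isPreconnected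
      (u := fun n : ℕ => ((r : ℝ) + 2) * m ^ (-(9/8:ℝ)) *
        ((1 + |Real.log m| + Real.log ((n : ℝ) + 2)) ^ r * ((n : ℝ) + m) ^ (-((7/8:ℝ) + 1))))
      ?_ isOpen_Ioo (convex_Ioo m Mb).isPreconnected ?_ ?_ hαJ ?_ hαJ
    · exact (summable_master r (hC1nn m) hm0 (by norm_num)).mul_left _
    · intro n u hu
      have hpu : (0:ℝ) < (n : ℝ) + u := by
        have h1 : (0:ℝ) ≤ (n:ℝ) := Nat.cast_nonneg n
        have := hu.1; linarith
      exact (hasDerivAt_DD_x n r 1 hpu).sub_const _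
    · intro n u hu
      exact key_bound hm0 (hmM.trans hM1) hu.1.le (hu.2.le.trans hM1)
        (by norm_num : (0:ℝ) < 7/8) (by norm_num [Complex.one_re])
        (by norm_num [Complex.one_re]) (by norm_num) r n
    · exact summable_zero.congr (fun n => (sub_self _).symm)
  -- Step 3 : identify the sum of derivatives
  have hP := appA α hα0 hα1 (r - 1)
  have hQ := appA α hα0 hα1 r
  have hψval : ∀ n : ℕ, -(((((n : ℝ) + α)⁻¹ : ℝ)) : ℂ) *
        ((r : ℂ) * (-((Real.log ((n : ℝ) + α) : ℝ) : ℂ)) ^ (r - 1)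
          + 1 * (-((Real.log ((n : ℝ) + α) : ℝ) : ℂ)) ^ r) *
        Complex.exp (1 * -((Real.log ((n : ℝ) + α) : ℝ) : ℂ))
      = (-(r:ℂ)) * DD α n (r-1) 2 + (-1) * DD α n r 2 := by
    intro n
    have hpα : (0:ℝ) < (n : ℝ) + α := by
      have : (0:ℝ) ≤ (n:ℝ) := Nat.cast_nonneg n; linarith
    have hexp := exp_neg_log hpα
    simp only [DD, one_mul]
    rw [show ((2:ℂ) * -((Real.log ((n : ℝ) + α) : ℝ) : ℂ))
        = -((Real.log ((n : ℝ) + α) : ℝ) : ℂ) + -((Real.log ((n : ℝ) + α) : ℝ) : ℂ) by ring,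
      Complex.exp_add, hexp, Complex.ofReal_inv]
    ring
  have hsum_eq : (∑' n : ℕ, (-(((((n : ℝ) + α)⁻¹ : ℝ)) : ℂ) *
        ((r : ℂ) * (-((Real.log ((n : ℝ) + α) : ℝ) : ℂ)) ^ (r - 1)
          + 1 * (-((Real.log ((n : ℝ) + α) : ℝ) : ℂ)) ^ r) *
        Complex.exp (1 * -((Real.log ((n : ℝ) + α) : ℝ) : ℂ))))
      = (-(r:ℂ)) * (∑' n : ℕ, DD α n (r-1) 2) + (-1) * (∑' n : ℕ, DD α n r 2) := by
    rw [tsum_congr hψval, Summable.tsum_add (hP.2.mul_left _) (hQ.2.mul_left _),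
      tsum_mul_left, tsum_mul_left]
  -- Step 4 : assemble
  have hfac : (r.factorial : ℂ) = (r : ℂ) * ((r-1).factorial : ℂ) := by
    rw [← Nat.cast_mul]
    exact_mod_cast (Nat.mul_factorial_pred (by omega)).symm
  have hfacne : ((r-1).factorial : ℂ) ≠ 0 :=
    Nat.cast_ne_zero.mpr (Nat.factorial_ne_zero _)
  have hrne : (r : ℂ) ≠ 0 := Nat.cast_ne_zero.mpr (by omega)
  have hval : (∑' n : ℕ, (-(((((n : ℝ) + α)⁻¹ : ℝ)) : ℂ) *
        ((r : ℂ) * (-((Real.log ((n : ℝ) + α) : ℝ) : ℂ)) ^ (r - 1)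
          + 1 * (-((Real.log ((n : ℝ) + α) : ℝ) : ℂ)) ^ r) *
        Complex.exp (1 * -((Real.log ((n : ℝ) + α) : ℝ) : ℂ)))) / (r.factorial : ℂ)
      = -(iteratedDeriv (r - 1)
            (fun w => HurwitzZeta.hurwitzZeta (α : UnitAddCircle) w) 2) /
          ((r - 1).factorial : ℂ)
        - (iteratedDeriv r
            (fun w => HurwitzZeta.hurwitzZeta (α : UnitAddCircle) w) 2) /
          (r.factorial : ℂ) := by
    rw [hsum_eq, ← hP.1, ← hQ.1, hfac]
    field_simp
    ring
  have hfinal : HasDerivAt (fun x : ℝ =>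
      (iteratedDeriv r (G α) 1 + ∑' n : ℕ, (DD x n r 1 - DD α n r 1)) / (r.factorial : ℂ))
      ((∑' n : ℕ, (-(((((n : ℝ) + α)⁻¹ : ℝ)) : ℂ) *
        ((r : ℂ) * (-((Real.log ((n : ℝ) + α) : ℝ) : ℂ)) ^ (r - 1)
          + 1 * (-((Real.log ((n : ℝ) + α) : ℝ) : ℂ)) ^ r) *
        Complex.exp (1 * -((Real.log ((n : ℝ) + α) : ℝ) : ℂ)))) / (r.factorial : ℂ)) α :=
    (hder.const_add _).div_const _
  rw [← hval]
  apply hfinal.congr_of_eventuallyEq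
  apply Filter.eventuallyEq_of_mem (isOpen_Ioo.mem_nhds hαJ)
  intro x hx
  show iteratedDeriv r (G x) 1 / (r.factorial : ℂ)
      = (iteratedDeriv r (G α) 1 + ∑' n : ℕ, (DD x n r 1 - DD α n r 1)) / (r.factorial : ℂ)
  rw [E1 x hx]
end

section
/- Let α be a real number with 0 < α < 1 and let G : ℝ → ℂ → ℂ be such that for every x with 0 < x < 1 the function G x is entire (Differentiable ℂ (G x)) and G x w = ζ(w,x) − 1/(w−1) for all w ≠ 1; set γ_0(x) = G x 1. Then the function x ↦ γ_0(x) has derivative −ζ(2,α) at x = α; i.e. HasDerivAt (fun x : ℝ => G x 1) (−ζ(2,α)) α. -/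
open Set Real Complex Filter Topology

lemma aux_summable {m p : ℝ} (hm : 0 < m) (hm1 : m ≤ 1) (hp : 1 < p) :
    Summable (fun n : ℕ => ((n : ℝ) + m) ^ (-p)) := by
  have h1 : Summable (fun n : ℕ => ((n : ℝ)) ^ (-p)) := Real.summable_nat_rpow.mpr (by linarith)
  have h2 : Summable (fun n : ℕ => (((n + 1 : ℕ)) : ℝ) ^ (-p)) := (summable_nat_add_iff 1).mpr h1
  have h3 : Summable (fun n : ℕ => m ^ (-p) * ((n : ℝ) + 1) ^ (-p)) := by
    simpa [Nat.cast_add, Nat.cast_one] using h2.mul_left (m ^ (-p))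
  refine h3.of_nonneg_of_le (fun n => Real.rpow_nonneg (by positivity) _) (fun n => ?_)
  rw [← Real.mul_rpow hm.le (by positivity)]
  apply Real.rpow_le_rpow_of_nonpos (by positivity) ?_ (by linarith)
  have hn : (0:ℝ) ≤ (n:ℝ) := Nat.cast_nonneg n
  nlinarith

lemma aux_bound {x y : ℝ} (hx : 0 < x) (hy : 0 < y) (n : ℕ) {w : ℂ}
    (hw : w ∈ Metric.ball (1:ℂ) 2⁻¹) :
    ‖((n:ℂ)+x) ^ (-w) - ((n:ℂ)+y) ^ (-w)‖ ≤
      2 * |x - y| * (((n:ℝ) + min x y) ^ (-(3/2):ℝ) + ((n:ℝ) + min x y) ^ (-(5/2):ℝ)) := by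
  set m := min x y with hmdef
  have hm : 0 < m := lt_min hx hy
  set S : ℝ := ((n:ℝ) + m) ^ (-(3/2):ℝ) + ((n:ℝ) + m) ^ (-(5/2):ℝ) with hSdef
  have hnm : (0:ℝ) < (n:ℝ) + m := by positivity
  have hball : ‖w - 1‖ < 2⁻¹ := by simpa [Metric.mem_ball, dist_eq_norm] using hw
  have hwn : ‖w‖ ≤ 2 := by
    have h1 : ‖w‖ ≤ ‖w - 1‖ + ‖(1:ℂ)‖ := by
      simpa using norm_add_le (w - 1) 1
    have h2 : ‖(1:ℂ)‖ = 1 := norm_one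
    linarith
  have hre : 1/2 < w.re ∧ w.re < 3/2 := by
    have h2 : |(w-1).re| ≤ ‖w - 1‖ := Complex.abs_re_le_norm _
    rw [Complex.sub_re, Complex.one_re, abs_le] at h2
    constructor
    · linarith [h2.1]
    · linarith [h2.2]
  set φ : ℝ → ℂ := fun t => ((n:ℂ)+t) ^ (-w) with hφ
  have key : ∀ t ∈ Icc m (max x y), ‖-w * ((n:ℂ)+t) ^ (-w-1) * 1‖ ≤ 2 * S := by
    intro t ht
    have htpos : 0 < (n:ℝ) + t := by have := ht.1; nlinarith
    have hcast : ((n:ℂ)+t) = (((n:ℝ)+t : ℝ) : ℂ) := by push_cast; ring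
    rw [norm_mul, norm_mul, norm_neg, norm_one, mul_one, hcast]
    have hnorm : ‖((((n:ℝ)+t : ℝ)) : ℂ) ^ (-w-1)‖ = ((n:ℝ)+t) ^ ((-w-1).re) := by
      exact Complex.norm_cpow_eq_rpow_re_of_pos htpos _
    rw [hnorm]
    have hq1 : (-w-1).re = -w.re - 1 := by simp
    have hb1 : ((n:ℝ)+t) ^ ((-w-1).re) ≤ ((n:ℝ)+m) ^ ((-w-1).re) :=
      Real.rpow_le_rpow_of_nonpos hnm (by linarith [ht.1]) (by rw [hq1]; linarith [hre.1])
    have hb2 : ((n:ℝ)+m) ^ ((-w-1).re) ≤ S := by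
      rcases le_or_gt 1 ((n:ℝ)+m) with h | h
      · have := Real.rpow_le_rpow_of_exponent_le h
          (show (-w-1).re ≤ (-(3/2):ℝ) by rw [hq1]; linarith [hre.1])
        have h0 : (0:ℝ) ≤ ((n:ℝ)+m) ^ (-(5/2):ℝ) := by positivity
        rw [hSdef]; linarith
      · have := Real.rpow_le_rpow_of_exponent_ge hnm h.le
          (show (-(5/2):ℝ) ≤ (-w-1).re by rw [hq1]; linarith [hre.2])
        have h0 : (0:ℝ) ≤ ((n:ℝ)+m) ^ (-(3/2):ℝ) := by positivity
        rw [hSdef]; linarith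
    have hS0 : 0 ≤ ((n:ℝ)+t) ^ ((-w-1).re) := Real.rpow_nonneg htpos.le _
    exact mul_le_mul hwn (hb1.trans hb2) hS0 (by norm_num)
  have hderiv : ∀ t ∈ Icc m (max x y), HasDerivWithinAt φ
      (-w * ((n:ℂ)+t) ^ (-w-1) * 1) (Icc m (max x y)) t := by
    intro t ht
    have htpos : 0 < (n:ℝ) + t := by have := ht.1; nlinarith
    have h0 : ((n:ℂ)+(t:ℝ)) ∈ Complex.slitPlane := by
      rw [Complex.mem_slitPlane_iff]
      left; push_cast; simpa using htpos
    have h1 : HasDerivAt (fun z : ℂ => ((n:ℂ)+z) ^ (-w))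
        (-w * ((n:ℂ)+(t:ℝ)) ^ (-w-1) * 1) ((t:ℝ) : ℂ) :=
      ((hasDerivAt_id ((t:ℝ):ℂ)).const_add (n:ℂ)).cpow_const h0
    exact (h1.comp_ofReal).hasDerivWithinAt
  have hmvt := (convex_Icc m (max x y)).norm_image_sub_le_of_norm_hasDerivWithin_le
    hderiv key (⟨min_le_right x y, le_max_right x y⟩ : y ∈ Icc m (max x y))
    (⟨min_le_left x y, le_max_left x y⟩ : x ∈ Icc m (max x y))
  rw [Real.norm_eq_abs] at hmvt
  calc ‖φ x - φ y‖ ≤ 2 * S * |x - y| := hmvt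
  _ = 2 * |x - y| * S := by ring

lemma aux_ne {a : ℝ} (ha : 0 < a) (n : ℕ) : ((n:ℂ) + a) ≠ 0 := by
  rw [show ((n:ℂ)+a) = (((n:ℝ)+a : ℝ):ℂ) by push_cast; ring, Ne, Complex.ofReal_eq_zero]
  positivity

lemma aux_key (α x : ℝ) (hα0 : 0 < α) (hα1 : α < 1) (hx0 : 0 < x) (hx1 : x < 1)
    (G : ℝ → ℂ → ℂ)
    (hG : ∀ x : ℝ, 0 < x → x < 1 → Differentiable ℂ (G x))
    (hG1 : ∀ x : ℝ, 0 < x → x < 1 → ∀ w : ℂ, w ≠ 1 →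
      G x w = HurwitzZeta.hurwitzZeta (x : UnitAddCircle) w - 1 / (w - 1)) :
    G x 1 - G α 1 = ∑' n : ℕ, (((n:ℂ)+x)⁻¹ - ((n:ℂ)+α)⁻¹) := by
  set m := min x α with hmdef
  have hm : 0 < m := lt_min hx0 hα0
  have hm1 : m ≤ 1 := (min_le_left x α).trans hx1.le
  set f : ℕ → ℂ → ℂ := fun n w => ((n:ℂ)+x) ^ (-w) - ((n:ℂ)+α) ^ (-w) with hf
  set u : ℕ → ℝ := fun n =>
    2 * |x - α| * (((n:ℝ) + m) ^ (-(3/2):ℝ) + ((n:ℝ) + m) ^ (-(5/2):ℝ)) with hu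
  have hus : Summable u := by
    apply Summable.mul_left
    exact (aux_summable hm hm1 (by norm_num)).add (aux_summable hm hm1 (by norm_num))
  have hfb : ∀ n : ℕ, ∀ w ∈ Metric.ball (1:ℂ) 2⁻¹, ‖f n w‖ ≤ u n := fun n w hw =>
    aux_bound hx0 hα0 n hw
  set S : ℂ → ℂ := fun w => ∑' n, f n w with hS
  have hScont : ContinuousOn S (Metric.ball (1:ℂ) 2⁻¹) := by
    apply continuousOn_tsum (fun n => ?_) hus hfb
    exact ((continuous_neg.const_cpow (Or.inl (aux_ne hx0 n))).sub
      (continuous_neg.const_cpow (Or.inl (aux_ne hα0 n)))).continuousOn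
  set D : ℂ → ℂ := fun w => G x w - G α w with hD
  have hDc : Continuous D := ((hG x hx0 hx1).sub (hG α hα0 hα1)).continuous
  -- the filter
  set l : Filter ℝ := 𝓝[Ioo (1:ℝ) (3/2)] 1 with hl
  have hlne : l.NeBot := by
    rw [hl, ← mem_closure_iff_nhdsWithin_neBot, closure_Ioo (by norm_num : (1:ℝ) ≠ 3/2)]
    exact ⟨le_refl 1, by norm_num⟩
  have hofReal : Tendsto (fun s : ℝ => (s : ℂ)) l (𝓝 (1:ℂ)) := by
    have := (Complex.continuous_ofReal.tendsto 1).mono_left (nhdsWithin_le_nhds (s := Ioo (1:ℝ) (3/2)))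
    simpa using this
  have hmem : ∀ᶠ s in l, s ∈ Ioo (1:ℝ) (3/2) := eventually_mem_nhdsWithin
  have h1 : Tendsto (fun s : ℝ => D (s:ℂ)) l (𝓝 (D 1)) := (hDc.tendsto 1).comp hofReal
  have h2 : Tendsto (fun s : ℝ => S (s:ℂ)) l (𝓝 (S 1)) := by
    have hball : (1:ℂ) ∈ Metric.ball (1:ℂ) 2⁻¹ := by
      simp only [Metric.mem_ball, dist_self]; norm_num
    have htend : Tendsto (fun s : ℝ => (s:ℂ)) l (𝓝[Metric.ball (1:ℂ) 2⁻¹] 1) := by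
      rw [tendsto_nhdsWithin_iff]
      refine ⟨hofReal, hmem.mono fun s hs => ?_⟩
      rw [Metric.mem_ball, dist_eq_norm, show ((s:ℂ) - 1) = ((s - 1 : ℝ) : ℂ) by push_cast; ring,
        Complex.norm_real, Real.norm_eq_abs, abs_of_pos (by linarith [hs.1])]
      linarith [hs.2]
    exact Filter.Tendsto.comp (g := S) (f := fun s : ℝ => (s:ℂ))
      (hScont.continuousWithinAt hball) htend
  haveI := hlne
  have heq : (fun s : ℝ => D (s:ℂ)) =ᶠ[l] (fun s : ℝ => S (s:ℂ)) := by
    refine hmem.mono fun s hs => ?_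
    have hre : 1 < ((s:ℂ)).re := by simpa using hs.1
    have hne : ((s:ℂ)) ≠ 1 := by
      rw [Ne, Complex.ofReal_eq_one]
      exact ne_of_gt hs.1
    have hsx := HurwitzZeta.hasSum_hurwitzZeta_of_one_lt_re (a := x) ⟨hx0.le, hx1.le⟩ hre
    have hsα := HurwitzZeta.hasSum_hurwitzZeta_of_one_lt_re (a := α) ⟨hα0.le, hα1.le⟩ hre
    have hDval : D (s:ℂ) = HurwitzZeta.hurwitzZeta (x : UnitAddCircle) (s:ℂ)
        - HurwitzZeta.hurwitzZeta (α : UnitAddCircle) (s:ℂ) := by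
      simp only [hD, hG1 x hx0 hx1 _ hne, hG1 α hα0 hα1 _ hne]
      ring
    have hfun : (fun n : ℕ => f n (s:ℂ))
        = fun n : ℕ => 1/((n:ℂ)+x) ^ (s:ℂ) - 1/((n:ℂ)+α) ^ (s:ℂ) := by
      funext n
      simp only [hf, cpow_neg, one_div]
    show D (s:ℂ) = S (s:ℂ)
    rw [hDval]
    show _ = ∑' n : ℕ, f n (s:ℂ)
    rw [show (∑' n : ℕ, f n (s:ℂ)) = ∑' n : ℕ, (1/((n:ℂ)+x) ^ (s:ℂ) - 1/((n:ℂ)+α) ^ (s:ℂ))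
      from by rw [hfun]]
    exact ((hsx.sub hsα).tsum_eq).symm
  have hD1S1 : D 1 = S 1 := tendsto_nhds_unique (h1.congr' heq) h2
  have hfin : (fun n : ℕ => f n 1) = fun n : ℕ => ((n:ℂ)+x)⁻¹ - ((n:ℂ)+α)⁻¹ := by
    funext n
    simp only [hf, Complex.cpow_neg_one]
  calc G x 1 - G α 1 = D 1 := rfl
  _ = S 1 := hD1S1
  _ = ∑' n : ℕ, (((n:ℂ)+x)⁻¹ - ((n:ℂ)+α)⁻¹) := by
    show (∑' n : ℕ, f n 1) = _
    rw [hfin]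

theorem stmt_15 (α : ℝ) (hα0 : 0 < α) (hα1 : α < 1)
    (G : ℝ → ℂ → ℂ)
    (hG : ∀ x : ℝ, 0 < x → x < 1 → Differentiable ℂ (G x))
    (hG1 : ∀ x : ℝ, 0 < x → x < 1 → ∀ w : ℂ, w ≠ 1 →
      G x w = HurwitzZeta.hurwitzZeta (x : UnitAddCircle) w - 1 / (w - 1)) :
    HasDerivAt (fun x : ℝ => G x 1)
      (-(HurwitzZeta.hurwitzZeta (α : UnitAddCircle) 2)) α := by
  set g : ℕ → ℝ → ℂ := fun n y => ((n:ℂ)+y)⁻¹ - ((n:ℂ)+α)⁻¹ with hgdef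
  set g' : ℕ → ℝ → ℂ := fun n y => -((((n:ℂ)+y)^2)⁻¹) with hg'def
  set t : Set ℝ := Ioo (α/2) ((α+1)/2) with htdef
  have hαt : α ∈ t := ⟨by linarith, by linarith⟩
  have hg : ∀ (n : ℕ), ∀ y ∈ t, HasDerivAt (g n) (g' n y) y := by
    intro n y hy
    have hy0 : 0 < y := lt_trans (by linarith) hy.1
    have hne : ((n:ℂ)+(y:ℝ)) ≠ 0 := aux_ne hy0 n
    have base : HasDerivAt (fun z : ℂ => ((n:ℂ)+z)⁻¹)
        (-1/((n:ℂ)+(y:ℝ))^2) ((y:ℝ):ℂ) := by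
      exact ((hasDerivAt_id ((y:ℝ):ℂ)).const_add (n:ℂ)).inv hne
    have base2 : HasDerivAt (fun s : ℝ => ((n:ℂ)+(s:ℝ))⁻¹) (-1/((n:ℂ)+(y:ℝ))^2) y :=
      base.comp_ofReal
    have := base2.sub_const (((n:ℂ)+α)⁻¹)
    refine this.congr_deriv ?_
    rw [hg'def]
    field_simp
  set u : ℕ → ℝ := fun n => ((n:ℝ) + α/2) ^ (-(2:ℝ)) with hudef
  have hus : Summable u := aux_summable (by linarith) (by linarith) (by norm_num)
  have hg' : ∀ (n : ℕ), ∀ y ∈ t, ‖g' n y‖ ≤ u n := by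
    intro n y hy
    have hy' : 0 < y := by have := hy.1; linarith
    have hy0 : 0 < (n:ℝ) + y := by positivity
    have h2 : 0 < (n:ℝ) + α/2 := by positivity
    have hcast : ((n:ℂ)+(y:ℝ)) = (((n:ℝ)+y : ℝ):ℂ) := by push_cast; ring
    have hun : u n = (((n:ℝ) + α/2)^(2:ℕ))⁻¹ := by
      show ((n:ℝ) + α/2) ^ (-(2:ℝ)) = _
      rw [show (-(2:ℝ)) = -((2:ℕ):ℝ) by norm_num, Real.rpow_neg h2.le, Real.rpow_natCast]
    rw [hun]
    show ‖-((((n:ℂ)+(y:ℝ))^2)⁻¹)‖ ≤ _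
    rw [norm_neg, norm_inv, norm_pow, hcast, Complex.norm_real, Real.norm_eq_abs,
      abs_of_pos hy0]
    have hle : ((n:ℝ) + α/2)^(2:ℕ) ≤ ((n:ℝ)+y)^(2:ℕ) :=
      pow_le_pow_left₀ h2.le (by linarith [hy.1]) 2
    exact inv_anti₀ (by positivity) hle
  have hg0 : Summable (fun n => g n α) := by
    simp only [hgdef, sub_self]
    exact summable_zero
  have hder := hasDerivAt_tsum_of_isPreconnected hus isOpen_Ioo
    ((convex_Ioo _ _).isPreconnected) hg hg' hαt hg0 hαt
  have hsum2 : (∑' n, g' n α) = -(HurwitzZeta.hurwitzZeta (α : UnitAddCircle) 2) := by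
    have hre2 : 1 < (2:ℂ).re := by norm_num
    have hs := (HurwitzZeta.hasSum_hurwitzZeta_of_one_lt_re (a := α) ⟨hα0.le, hα1.le⟩ hre2).neg
    have hfun : (fun n : ℕ => g' n α) = fun n : ℕ => -(1 / ((n:ℂ)+α) ^ (2:ℂ)) := by
      funext n
      rw [hg'def, show ((2:ℂ)) = ((2:ℕ):ℂ) by norm_num, Complex.cpow_natCast, one_div]
    rw [hfun]
    exact hs.tsum_eq
  have heq : (fun x : ℝ => G x 1) =ᶠ[𝓝 α] (fun y : ℝ => G α 1 + ∑' n, g n y) := by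
    filter_upwards [Ioo_mem_nhds hα0 hα1] with y hy
    have := aux_key α y hα0 hα1 hy.1 hy.2 G hG hG1
    rw [hgdef]
    linear_combination this
  have final := (hder.const_add (G α 1)).congr_of_eventuallyEq heq
  rwa [hsum2] at final
end
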